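/- arXiv:1806.03736 — 6 statements merged into one kernel-verified Lean document; each statement's English description precedes it below -/
import Mathlib

section
/- Fix K(n) = o(n^{2/3}). Then uniformly for integers k with |k| < K(n), one has (n+k)! ~ √(2πn) (n/e)^n · exp(k·log n + k²/(2n)) as n → ∞; that is, the supremum over |k| < K(n) of |√(2πn)(n/e)^n exp(k log n + k²/(2n)) / (n+k)! − 1| tends to 0. -/
open Filter

private lemma log_taylor2 {x : ℝ} (hx : |x| ≤ 1/2) :
    |Real.log (1 + x) - (x - x ^ 2 / 2)| ≤ 2 * |x| ^ 3 := by
  have h1 : |(-x)| < 1 := by rw [abs_neg]; linarith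
  have h := Real.abs_log_sub_add_sum_range_le h1 2
  simp only [Finset.sum_range_succ, Finset.sum_range_zero] at h
  have e1 : (1 : ℝ) - -x = 1 + x := by ring
  rw [e1, abs_neg] at h
  have e2 : 0 + (-x) ^ (0+1) / ((0:ℕ)+1) + (-x) ^ (1+1) / ((1:ℕ)+1) + Real.log (1 + x)
      = Real.log (1 + x) - (x - x ^ 2 / 2) := by push_cast; ring
  rw [e2] at h
  have h2 : |x| ^ (2+1) / (1 - |x|) ≤ 2 * |x| ^ 3 := by
    rw [div_le_iff₀ (by linarith)]
    have h3 : |x| ^ (2+1) = |x| ^ 3 := by norm_num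
    rw [h3]
    nlinarith [mul_nonneg (pow_nonneg (abs_nonneg x) 3) (show (0:ℝ) ≤ 1 - 2*|x| by linarith)]
  exact h.trans h2

private lemma cube_aux {a : ℝ} (h0 : 0 ≤ a) (h2 : a ≤ 1/2) :
    a^2/2 ≤ a/4 ∧ 2*a^3 ≤ a/2 := by
  have k1 : 0 ≤ a * (1 - 2*a) := mul_nonneg h0 (by linarith)
  have k2 : 0 ≤ (a*a) * (1 - 2*a) := mul_nonneg (mul_nonneg h0 h0) (by linarith)
  constructor <;> nlinarith [k1, k2]

set_option maxHeartbeats 2000000 in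
private lemma key (K : ℕ → ℝ)
    (hK : (fun n : ℕ => K n) =o[atTop] (fun n : ℕ => (n : ℝ) ^ ((2 : ℝ) / 3)))
    {ε : ℝ} (hε : 0 < ε) :
    ∀ᶠ n : ℕ in atTop, ∀ k : ℤ, |(k : ℝ)| < K n → 0 ≤ (n : ℤ) + k →
      |Real.sqrt (2 * Real.pi * n) * ((n : ℝ) / Real.exp 1) ^ n *
          Real.exp (k * Real.log n + (k : ℝ) ^ 2 / (2 * n)) /
            (Nat.factorial ((n : ℤ) + k).toNat : ℝ) - 1| ≤ ε := by
  set δ : ℝ := min (ε/8) (1/4) with hδdef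
  have hδ : 0 < δ := lt_min (by linarith) (by norm_num)
  have hδ4 : δ ≤ 1/4 := min_le_right _ _
  have hδε : 4 * δ ≤ ε := by
    have := min_le_left (ε/8) (1/4); linarith
  set c : ℝ := δ / 6 with hcdef
  have hc : 0 < c := by positivity
  have hc1 : c ≤ 1/24 := by rw [hcdef]; linarith
  -- Stirling
  set f : ℕ → ℝ := fun m =>
    (Nat.factorial m : ℝ) / (Real.sqrt (2 * Real.pi * m) * ((m : ℝ) / Real.exp 1) ^ m) with hfdef
  have hfeq : ∀ m : ℕ, f m = Stirling.stirlingSeq m / Real.sqrt Real.pi := by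
    intro m
    simp only [hfdef, Stirling.stirlingSeq]
    rw [show 2 * Real.pi * (m : ℝ) = Real.pi * (2 * m) by ring,
      Real.sqrt_mul Real.pi_pos.le, div_div]
    ring_nf
  have hsqpi : Real.sqrt Real.pi ≠ 0 := (Real.sqrt_pos.mpr Real.pi_pos).ne'
  have hf : Tendsto f atTop (nhds 1) := by
    have h := Stirling.tendsto_stirlingSeq_sqrt_pi.div_const (Real.sqrt Real.pi)
    rw [div_self hsqpi] at h
    exact Tendsto.congr (fun m => (hfeq m).symm) h
  have hg : Tendsto (fun m => Real.log (f m)) atTop (nhds 0) := by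
    rw [← Real.log_one]
    exact ((Real.continuousAt_log one_ne_zero).tendsto.comp hf)
  have hgδ : ∀ᶠ m : ℕ in atTop, |Real.log (f m)| ≤ δ := by
    filter_upwards [Metric.tendsto_nhds.mp hg δ hδ] with m hm
    rw [Real.dist_eq, sub_zero] at hm; exact hm.le
  obtain ⟨N₀, hN₀⟩ := eventually_atTop.mp hgδ
  filter_upwards [hK.def hc, eventually_ge_atTop 1, eventually_ge_atTop (2 * N₀ + 2)]
    with n hKc hn1 hnN₀ k hk hnk
  set N : ℝ := (n : ℝ) with hNdef
  have hN1 : (1:ℝ) ≤ N := by simp only [hNdef]; exact_mod_cast hn1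
  have hN : 0 < N := by linarith
  -- bounds on K n
  have h23 : N ^ ((2:ℝ)/3) ≤ N := by
    calc N ^ ((2:ℝ)/3) ≤ N ^ (1:ℝ) :=
          Real.rpow_le_rpow_of_exponent_le hN1 (by norm_num)
      _ = N := Real.rpow_one N
  have h23pos : 0 ≤ N ^ ((2:ℝ)/3) := Real.rpow_nonneg hN.le _
  have hKc' : K n ≤ c * N ^ ((2:ℝ)/3) := by
    have := hKc
    simp only [Real.norm_eq_abs] at this
    rw [abs_of_nonneg h23pos] at this
    exact (le_abs_self _).trans this
  have hkK : |(k:ℝ)| ≤ K n := hk.le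
  have hkcN : |(k:ℝ)| ≤ c * N := hkK.trans (hKc'.trans (mul_le_mul_of_nonneg_left h23 hc.le))
  have hk3 : |(k:ℝ)| ^ 3 ≤ c ^ 3 * N ^ 2 := by
    have h1 : |(k:ℝ)| ^ 3 ≤ (c * N ^ ((2:ℝ)/3)) ^ 3 :=
      pow_le_pow_left₀ (abs_nonneg _) (hkK.trans hKc') 3
    have h2 : (N ^ ((2:ℝ)/3)) ^ 3 = N ^ 2 := by
      rw [← Real.rpow_natCast (N ^ ((2:ℝ)/3)) 3, ← Real.rpow_mul hN.le]
      norm_num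
    calc |(k:ℝ)| ^ 3 ≤ (c * N ^ ((2:ℝ)/3)) ^ 3 := h1
      _ = c ^ 3 * (N ^ ((2:ℝ)/3)) ^ 3 := by ring
      _ = c ^ 3 * N ^ 2 := by rw [h2]
  have hkN2 : |(k:ℝ)| ≤ N / 24 := by
    have h1 : c * N ≤ (1/24) * N := mul_le_mul_of_nonneg_right hc1 hN.le
    linarith
  set m : ℕ := ((n : ℤ) + k).toNat with hmdef
  have hm : (m : ℝ) = N + k := by
    have : ((m : ℤ) : ℝ) = (((n:ℤ) + k : ℤ) : ℝ) := by
      rw [hmdef, Int.toNat_of_nonneg hnk]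
    push_cast at this
    push_cast
    linarith
  have habsk : -(N/24) ≤ (k:ℝ) ∧ (k:ℝ) ≤ N/24 := abs_le.mp hkN2
  have hM : 0 < (m:ℝ) := by rw [hm]; linarith [habsk.1]
  have hM2N : (m:ℝ) ≤ 2 * N := by rw [hm]; linarith [habsk.2]
  have hMN2 : N / 2 ≤ (m:ℝ) := by rw [hm]; linarith [habsk.1]
  have hmN₀ : N₀ ≤ m := by
    have : (N₀ : ℝ) ≤ (m : ℝ) := by
      have : (2 * N₀ + 2 : ℝ) ≤ N := by simp only [hNdef]; exact_mod_cast hnN₀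
      linarith
    exact_mod_cast this
  have hgm : |Real.log (f m)| ≤ δ := hN₀ m hmN₀
  -- positivity
  have he : (0:ℝ) < Real.exp 1 := Real.exp_pos 1
  have hP : 0 < Real.sqrt (2 * Real.pi * N) * (N / Real.exp 1) ^ n *
      Real.exp ((k:ℝ) * Real.log N + (k : ℝ) ^ 2 / (2 * N)) := by positivity
  have hQ : 0 < Real.sqrt (2 * Real.pi * (m:ℝ)) * ((m:ℝ) / Real.exp 1) ^ m := by positivity
  have hfm : 0 < f m := by
    rw [hfdef]
    have : (0:ℝ) < Nat.factorial m := by exact_mod_cast Nat.factorial_pos m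
    positivity
  have hfact : (Nat.factorial m : ℝ) =
      (Real.sqrt (2 * Real.pi * (m:ℝ)) * ((m:ℝ) / Real.exp 1) ^ m) * f m := by
    rw [hfdef]; field_simp
  clear_value f m
  -- logs
  set x : ℝ := (k:ℝ) / N with hxdef
  have hx : |x| ≤ c := by
    rw [hxdef, abs_div, abs_of_pos hN, div_le_iff₀ hN]; linarith [hkcN]
  have hx12 : |x| ≤ 1/2 := hx.trans (by linarith)
  set L : ℝ := Real.log (1 + x) with hLdef
  have h1x : 0 < 1 + x := by
    have := abs_le.mp hx12; linarith [this.1]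
  have hlogM : Real.log (m:ℝ) = Real.log N + L := by
    have hMeq : (m:ℝ) = N * (1 + x) := by rw [hxdef]; field_simp [hm]; exact hm
    rw [hMeq, Real.log_mul hN.ne' h1x.ne']
  clear_value L
  have hlogP : Real.log (Real.sqrt (2 * Real.pi * N) * (N / Real.exp 1) ^ n *
        Real.exp ((k:ℝ) * Real.log N + (k : ℝ) ^ 2 / (2 * N)))
      = (Real.log (2 * Real.pi) + Real.log N) / 2 + n * (Real.log N - 1)
        + ((k:ℝ) * Real.log N + (k : ℝ) ^ 2 / (2 * N)) := by
    rw [Real.log_mul (by positivity) (by positivity),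
      Real.log_mul (by positivity) (by positivity), Real.log_exp,
      Real.log_pow, Real.log_div hN.ne' he.ne', Real.log_exp,
      Real.log_sqrt (by positivity), Real.log_mul (by positivity) hN.ne']
  have hlogQ : Real.log (Real.sqrt (2 * Real.pi * (m:ℝ)) * ((m:ℝ) / Real.exp 1) ^ m)
      = (Real.log (2 * Real.pi) + Real.log (m:ℝ)) / 2 + m * (Real.log (m:ℝ) - 1) := by
    rw [Real.log_mul (by positivity) (by positivity),
      Real.log_pow, Real.log_div hM.ne' he.ne', Real.log_exp,
      Real.log_sqrt (by positivity), Real.log_mul (by positivity) hM.ne']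
  set G : ℝ := Real.log (Real.sqrt (2 * Real.pi * N) * (N / Real.exp 1) ^ n *
        Real.exp ((k:ℝ) * Real.log N + (k : ℝ) ^ 2 / (2 * N)))
      - Real.log (Real.sqrt (2 * Real.pi * (m:ℝ)) * ((m:ℝ) / Real.exp 1) ^ m) with hGdef
  have hGeq : G = -L/2 + ((k:ℝ)^2/(2*N) + (k:ℝ) - (N + (k:ℝ)) * L) := by
    rw [hGdef, hlogP, hlogQ, hlogM, hm]
    ring
  clear_value G
  set r : ℝ := L - (x - x ^ 2 / 2) with hrdef
  clear_value r
  have hr : |r| ≤ 2 * |x| ^ 3 := by rw [hrdef, hLdef]; exact log_taylor2 hx12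
  have hident : (k:ℝ)^2/(2*N) + (k:ℝ) - (N + (k:ℝ)) * (x - x^2/2)
      = (k:ℝ)^3 / (2 * N^2) := by
    rw [hxdef]; field_simp; ring
  have hGeq2 : G = -L/2 + (k:ℝ)^3 / (2 * N^2) - (N + (k:ℝ)) * r := by
    rw [hGeq, ← hident, hrdef]; ring
  -- bounds
  have hxabs3 : |x| ^ 3 = |(k:ℝ)| ^ 3 / N ^ 3 := by
    rw [hxdef, abs_div, abs_of_pos hN, div_pow]
  have hL : |L| ≤ 2 * |x| := by
    have h1 : |L| ≤ |x - x^2/2| + |r| := by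
      rw [hrdef]; calc |L| = |(x - x^2/2) + (L - (x - x^2/2))| := by ring_nf
        _ ≤ |x - x^2/2| + |L - (x - x^2/2)| := abs_add_le _ _
    have h2 : |x - x^2/2| ≤ |x| + x^2/2 := by
      calc |x - x^2/2| ≤ |x| + |x^2/2| := abs_sub _ _
        _ = |x| + x^2/2 := by
              rw [abs_of_nonneg (show (0:ℝ) ≤ x^2/2 by positivity)]
    obtain ⟨c1, c2⟩ := cube_aux (abs_nonneg x) hx12
    have h3 : x^2/2 ≤ |x|/4 := by rw [← sq_abs x]; exact c1
    linarith [abs_nonneg x]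
  have hk3' : |(k:ℝ)| ^ 3 / N ^ 2 ≤ c ^ 3 := by
    rw [div_le_iff₀ (by positivity)]; exact hk3
  have hc3 : c ^ 3 ≤ c := pow_le_of_le_one hc.le (by linarith) (by norm_num)
  have hGbound : |G| ≤ δ := by
    have b1 : |(-L/2)| ≤ c := by
      rw [abs_div, abs_neg]; simp only [abs_two]
      calc |L| / 2 ≤ 2 * |x| / 2 := by linarith [hL]
        _ = |x| := by ring
        _ ≤ c := hx
    have b2 : |(k:ℝ)^3 / (2 * N^2)| ≤ c := by
      rw [abs_div, abs_pow]
      have : |(2 * N^2)| = 2 * N^2 := abs_of_pos (by positivity)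
      rw [this, div_le_iff₀ (by positivity)]
      calc |(k:ℝ)| ^ 3 ≤ c ^ 3 * N ^ 2 := hk3
        _ ≤ c * N ^ 2 := mul_le_mul_of_nonneg_right hc3 (by positivity)
        _ ≤ c * (2 * N ^ 2) := by
            rw [show c * (2 * N^2) = c * N^2 + c * N^2 by ring]
            have h0 : 0 ≤ c * N ^ 2 := by positivity
            linarith
    have b3 : |(N + (k:ℝ)) * r| ≤ 4 * c := by
      rw [abs_mul]
      have hNk : |N + (k:ℝ)| ≤ 2 * N := by
        rw [← hm, abs_of_pos hM]; exact hM2N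
      calc |N + (k:ℝ)| * |r| ≤ (2 * N) * (2 * |x|^3) := by
            apply mul_le_mul hNk hr (abs_nonneg _) (by positivity)
        _ = 4 * (N * |x|^3) := by ring
        _ ≤ 4 * c := by
            rw [hxabs3]
            have : N * (|(k:ℝ)|^3 / N^3) = |(k:ℝ)|^3 / N^2 := by field_simp
            rw [this]; linarith [hk3'.trans hc3]
    calc |G| = |(-L/2) + ((k:ℝ)^3 / (2*N^2) + -((N + (k:ℝ)) * r))| := by rw [hGeq2]; ring_nf
      _ ≤ |(-L/2)| + |(k:ℝ)^3 / (2*N^2) + -((N + (k:ℝ)) * r)| := abs_add_le _ _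
      _ ≤ |(-L/2)| + (|(k:ℝ)^3 / (2*N^2)| + |(-((N + (k:ℝ)) * r))|) := by
            linarith [abs_add_le ((k:ℝ)^3 / (2*N^2)) (-((N + (k:ℝ)) * r))]
      _ ≤ c + (c + 4 * c) := by rw [abs_neg]; linarith [b1, b2, b3]
      _ = 6 * c := by ring
      _ = δ := by rw [hcdef]; ring
  -- conclude
  set T : ℝ := G - Real.log (f m) with hTdef
  clear_value T
  have hT : |T| ≤ 2 * δ := by
    rw [hTdef]
    calc |G - Real.log (f m)| ≤ |G| + |Real.log (f m)| := abs_sub _ _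
      _ ≤ δ + δ := by linarith [hGbound, hgm]
      _ = 2 * δ := by ring
  have hT1 : |T| ≤ 1 := hT.trans (by linarith)
  have hexpr : Real.sqrt (2 * Real.pi * N) * (N / Real.exp 1) ^ n *
      Real.exp ((k:ℝ) * Real.log N + (k : ℝ) ^ 2 / (2 * N)) / (Nat.factorial m : ℝ)
      = Real.exp T := by
    rw [hfact, ← Real.exp_log hfm, ← Real.exp_log hP, ← Real.exp_log hQ,
      ← Real.exp_add, ← Real.exp_sub]
    congr 1
    rw [hTdef, hGdef]
    ring
  rw [hexpr]
  calc |Real.exp T - 1| ≤ 2 * |T| := Real.abs_exp_sub_one_le hT1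
    _ ≤ 4 * δ := by linarith
    _ ≤ ε := hδε

/-- Fix `K(n) = o(n^{2/3})`.  Then uniformly for integers `k` with `|k| < K(n)` (and
`n + k ≥ 0`), one has `(n+k)! ~ √(2πn) (n/e)^n exp(k log n + k²/(2n))` as `n → ∞`:
the supremum over such `k` of
`|√(2πn)(n/e)^n exp(k log n + k²/(2n)) / (n+k)! − 1|` tends to `0`. -/
theorem stmt4 (K : ℕ → ℝ)
    (hK : (fun n : ℕ => K n) =o[atTop] (fun n : ℕ => (n : ℝ) ^ ((2 : ℝ) / 3))) :
    Tendsto (fun n : ℕ =>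
      sSup {x : ℝ | ∃ k : ℤ, |(k : ℝ)| < K n ∧ 0 ≤ (n : ℤ) + k ∧
        x = |Real.sqrt (2 * Real.pi * n) * ((n : ℝ) / Real.exp 1) ^ n *
          Real.exp (k * Real.log n + (k : ℝ) ^ 2 / (2 * n)) /
            (Nat.factorial ((n : ℤ) + k).toNat : ℝ) - 1|})
      atTop (nhds 0) := by
  rw [Metric.tendsto_nhds]
  intro ε hε
  filter_upwards [key K hK (show (0:ℝ) < ε/2 by linarith)] with n hn
  set S : Set ℝ := {x : ℝ | ∃ k : ℤ, |(k : ℝ)| < K n ∧ 0 ≤ (n : ℤ) + k ∧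
        x = |Real.sqrt (2 * Real.pi * n) * ((n : ℝ) / Real.exp 1) ^ n *
          Real.exp (k * Real.log n + (k : ℝ) ^ 2 / (2 * n)) /
            (Nat.factorial ((n : ℤ) + k).toNat : ℝ) - 1|} with hSdef
  have hub : ∀ x ∈ S, x ≤ ε/2 := by
    rintro x ⟨k, hk1, hk2, rfl⟩
    exact hn k hk1 hk2
  have hnn : 0 ≤ sSup S := Real.sSup_nonneg fun x hx => by
    obtain ⟨k, _, _, rfl⟩ := hx; exact abs_nonneg _
  have hle : sSup S ≤ ε/2 := Real.sSup_le hub (by linarith)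
  rw [Real.dist_eq, sub_zero, abs_of_nonneg hnn]
  linarith
end

section
/- Let A be an affine subspace of R^k defined by linear equations with rational coefficients, and suppose A contains an integral point p. Then there exists a constant D such that for every x ∈ A there is an integral point y ∈ A with ||x − y||_∞ < D. -/
lemma int_of_den_dvd (q : ℚ) (n : ℕ) (h : q.den ∣ n) : ∃ z : ℤ, (z : ℚ) = n * q := by
  obtain ⟨c, hc⟩ := h
  refine ⟨q.num * c, ?_⟩
  have h0 : (q.den : ℚ) ≠ 0 := Nat.cast_ne_zero.mpr q.den_ne_zero
  have hnum := Rat.num_div_den q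
  rw [div_eq_iff h0] at hnum
  push_cast [hc]
  rw [hnum]; ring

lemma spanA {k m : ℕ} (C : Matrix (Fin m) (Fin k) ℚ) (x : Fin k → ℝ)
    (hx : ∀ i, ∑ j, (C i j : ℝ) * x j = 0) :
    x ∈ Submodule.span ℝ ((fun v : Fin k → ℚ => fun j => (v j : ℝ)) ''
      {v : Fin k → ℚ | ∀ i, ∑ j, C i j * v j = 0}) := by
  set V : Submodule ℚ ℝ := Submodule.span ℚ (Set.range x) with hV
  have : FiniteDimensional ℚ V := FiniteDimensional.span_of_finite ℚ (Set.finite_range x)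
  set e := Module.finBasis ℚ V with he
  have hxV : ∀ j, x j ∈ V := fun j => Submodule.subset_span ⟨j, rfl⟩
  set a : Fin k → Fin (Module.finrank ℚ V) → ℚ :=
    fun j t => e.repr ⟨x j, hxV j⟩ t with ha
  have hx_eq : ∀ j, x j = ∑ t, a j t • ((e t : V) : ℝ) := by
    intro j
    have h2 : x j = ((∑ i, e.repr ⟨x j, hxV j⟩ i • e i : V) : ℝ) :=
      congrArg Subtype.val (e.sum_repr ⟨x j, hxV j⟩).symm
    rw [h2, Submodule.coe_sum]; rfl
  have hli : LinearIndependent ℚ (fun t => ((e t : V) : ℝ)) :=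
    e.linearIndependent.map' V.subtype V.ker_subtype
  have hker : ∀ t, (fun j => a j t) ∈ {v : Fin k → ℚ | ∀ i, ∑ j, C i j * v j = 0} := by
    intro t i
    have key : ∑ t', (∑ j, C i j * a j t') • ((e t' : V) : ℝ) = 0 := by
      calc ∑ t', (∑ j, C i j * a j t') • ((e t' : V) : ℝ)
          = ∑ t', ∑ j, ((C i j * a j t' : ℚ) • ((e t' : V) : ℝ)) := by
            simp [Finset.sum_smul]
        _ = ∑ j, ∑ t', ((C i j * a j t' : ℚ) • ((e t' : V) : ℝ)) := Finset.sum_comm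
        _ = ∑ j, (C i j : ℝ) * x j := by
            refine Finset.sum_congr rfl fun j _ => ?_
            rw [hx_eq j, Finset.mul_sum]
            refine Finset.sum_congr rfl fun t' _ => ?_
            push_cast [Rat.smul_def]
            ring
        _ = 0 := hx i
    have := linearIndependent_iff'.mp hli Finset.univ (fun t' => ∑ j, C i j * a j t') key
    exact this t (Finset.mem_univ t)
  have : x = ∑ t, ((e t : V) : ℝ) • (fun j => ((a j t : ℝ))) := by
    funext j
    rw [hx_eq j]
    simp [Rat.smul_def, mul_comm]
  rw [this]
  refine Submodule.sum_mem _ fun t _ => Submodule.smul_mem _ _ (Submodule.subset_span ?_)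
  exact ⟨fun j => a j t, hker t, rfl⟩

/-- Let `A ⊆ ℝ^k` be an affine subspace cut out by linear equations with rational
coefficients, containing an integral point `p`.  Then there is `D` such that every
`x ∈ A` is within `∞`-distance `< D` of an integral point of `A`. -/
theorem stmt5 (k m : ℕ) (C : Matrix (Fin m) (Fin k) ℚ) (b : Fin m → ℚ)
    (p : Fin k → ℤ) (hp : ∀ i, ∑ j, (C i j : ℝ) * (p j : ℝ) = (b i : ℝ)) :
    ∃ D : ℝ, ∀ x : Fin k → ℝ, (∀ i, ∑ j, (C i j : ℝ) * x j = (b i : ℝ)) →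
      ∃ y : Fin k → ℤ, (∀ i, ∑ j, (C i j : ℝ) * (y j : ℝ) = (b i : ℝ)) ∧
        ∀ j, |x j - (y j : ℝ)| < D := by
  classical
  set K : Submodule ℚ (Fin k → ℚ) := LinearMap.ker (Matrix.mulVecLin C) with hK
  set r := Module.finrank ℚ K with hr
  set w' := Module.finBasis ℚ K with hw'
  set w : Fin r → Fin k → ℚ := fun t => (w' t : Fin k → ℚ) with hw
  have hw_ker : ∀ t i, ∑ j, C i j * w t j = 0 := by
    intro t i
    have h1 : Matrix.mulVec C (w t) = 0 := (w' t).2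
    have := congrFun h1 i
    simpa [Matrix.mulVec, dotProduct] using this
  have hw_span : ∀ v : Fin k → ℚ, (∀ i, ∑ j, C i j * v j = 0) →
      ∃ c : Fin r → ℚ, ∀ j, ∑ t, c t * w t j = v j := by
    intro v hv
    have hvK : v ∈ K := by
      rw [hK, LinearMap.mem_ker]
      ext i
      simpa [Matrix.mulVecLin, Matrix.mulVec, dotProduct] using hv i
    refine ⟨fun t => w'.repr ⟨v, hvK⟩ t, fun j => ?_⟩
    have h2 := congrArg Subtype.val (w'.sum_repr ⟨v, hvK⟩)
    have h3 := congrFun h2 j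
    simpa [w, Finset.sum_apply, mul_comm, -Module.Basis.sum_repr] using h3
  set N : ℕ := ∏ t, ∏ j, (w t j).den with hN
  have hNdvd : ∀ t j, (w t j).den ∣ N := by
    intro t j
    exact (Finset.dvd_prod_of_mem (fun j' => (w t j').den) (Finset.mem_univ j)).trans
      (Finset.dvd_prod_of_mem (fun t' => ∏ j', (w t' j').den) (Finset.mem_univ t))
  have hN0 : (N : ℚ) ≠ 0 := by
    simp only [hN]
    push_cast
    exact Finset.prod_ne_zero_iff.mpr fun t _ =>
      Finset.prod_ne_zero_iff.mpr fun j _ => Nat.cast_ne_zero.mpr (w t j).den_ne_zero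
  set u : Fin r → Fin k → ℤ := fun t j => (int_of_den_dvd (w t j) N (hNdvd t j)).choose with hu
  have huw : ∀ t j, (u t j : ℚ) = N * w t j :=
    fun t j => (int_of_den_dvd (w t j) N (hNdvd t j)).choose_spec
  have hu_ker : ∀ t i, ∑ j, C i j * (u t j : ℚ) = 0 := by
    intro t i
    calc ∑ j, C i j * (u t j : ℚ) = N * ∑ j, C i j * w t j := by
          rw [Finset.mul_sum]
          exact Finset.sum_congr rfl fun j _ => by rw [huw t j]; ring
      _ = 0 := by rw [hw_ker t i, mul_zero]
  have hu_kerR : ∀ t i, ∑ j, (C i j : ℝ) * (u t j : ℝ) = 0 := by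
    intro t i
    have h := hu_ker t i
    have h2 : ((∑ j, C i j * (u t j : ℚ) : ℚ) : ℝ) = 0 := by rw [h]; norm_num
    push_cast at h2
    exact h2
  refine ⟨1 + ∑ t, ∑ j', |(u t j' : ℝ)|, ?_⟩
  intro x hx
  set z : Fin k → ℝ := fun j => x j - (p j : ℝ) with hz
  have hzker : ∀ i, ∑ j, (C i j : ℝ) * z j = 0 := by
    intro i
    simp only [hz, mul_sub, Finset.sum_sub_distrib]
    rw [hx i, hp i, sub_self]
  have hspan := spanA C z hzker
  set uR : Fin r → Fin k → ℝ := fun t j => (u t j : ℝ) with huR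
  have hle : Submodule.span ℝ ((fun v : Fin k → ℚ => fun j => (v j : ℝ)) ''
      {v : Fin k → ℚ | ∀ i, ∑ j, C i j * v j = 0}) ≤ Submodule.span ℝ (Set.range uR) := by
    rw [Submodule.span_le]
    rintro _ ⟨v, hv, rfl⟩
    rw [SetLike.mem_coe, Submodule.mem_span_range_iff_exists_fun]
    obtain ⟨c, hc⟩ := hw_span v hv
    refine ⟨fun t => (c t : ℝ) / N, ?_⟩
    funext j
    have hNR : (N : ℝ) ≠ 0 := by
      have : N ≠ 0 := by exact_mod_cast fun h => hN0 (by exact_mod_cast congrArg (Nat.cast : ℕ → ℚ) h)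
      exact_mod_cast this
    have h4 : ((∑ t, c t * w t j : ℚ) : ℝ) = (v j : ℝ) := by exact_mod_cast hc j
    push_cast at h4
    simp only [Finset.sum_apply, Pi.smul_apply, smul_eq_mul, huR]
    have h5 : ∀ t, ((u t j : ℝ)) = (N : ℝ) * (w t j : ℝ) := fun t => by exact_mod_cast huw t j
    calc ∑ t, (c t : ℝ) / N * (u t j : ℝ) = ∑ t, (c t : ℝ) * (w t j : ℝ) := by
          refine Finset.sum_congr rfl fun t _ => ?_
          rw [h5]; field_simp
      _ = (v j : ℝ) := h4
  obtain ⟨c, hc⟩ := (Submodule.mem_span_range_iff_exists_fun ℝ).mp (hle hspan)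
  refine ⟨fun j => p j + ∑ t, ⌊c t⌋ * u t j, ?_, ?_⟩
  · intro i
    have expand : ∑ j, (C i j : ℝ) * ((p j : ℝ) + ∑ t, (⌊c t⌋ : ℝ) * (u t j : ℝ))
        = (∑ j, (C i j : ℝ) * (p j : ℝ))
          + ∑ t, (⌊c t⌋ : ℝ) * ∑ j, (C i j : ℝ) * (u t j : ℝ) := by
      simp only [mul_add, Finset.sum_add_distrib, Finset.mul_sum]
      congr 1
      rw [Finset.sum_comm]
      exact Finset.sum_congr rfl fun t _ => Finset.sum_congr rfl fun j _ => by ring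
    push_cast
    rw [expand, hp i]
    simp [hu_kerR]
  · intro j
    have hzj : z j = ∑ t, c t * (u t j : ℝ) := by
      have h6 := congrFun hc j
      simpa [huR, Finset.sum_apply] using h6.symm
    have hxj : x j = z j + (p j : ℝ) := by simp [hz]
    have hxy : x j - ((p j : ℝ) + ∑ t, (⌊c t⌋ : ℝ) * (u t j : ℝ))
        = ∑ t, Int.fract (c t) * (u t j : ℝ) := by
      rw [hxj, hzj]
      have h7 : (∑ t, c t * (u t j : ℝ)) + (p j : ℝ)
          - ((p j : ℝ) + ∑ t, (⌊c t⌋ : ℝ) * (u t j : ℝ))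
          = (∑ t, c t * (u t j : ℝ)) - ∑ t, (⌊c t⌋ : ℝ) * (u t j : ℝ) := by ring
      rw [h7, ← Finset.sum_sub_distrib]
      exact Finset.sum_congr rfl fun t _ => by rw [Int.fract]; ring
    push_cast
    rw [hxy]
    calc |∑ t, Int.fract (c t) * (u t j : ℝ)|
        ≤ ∑ t, |Int.fract (c t) * (u t j : ℝ)| := Finset.abs_sum_le_sum_abs _ _
      _ ≤ ∑ t, |(u t j : ℝ)| := Finset.sum_le_sum fun t _ => by
          rw [abs_mul]
          have h1 : |Int.fract (c t)| ≤ 1 := by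
            rw [abs_of_nonneg (Int.fract_nonneg _)]
            exact (Int.fract_lt_one _).le
          nlinarith [abs_nonneg ((u t j : ℝ))]
      _ ≤ ∑ t, ∑ j', |(u t j' : ℝ)| := Finset.sum_le_sum fun t _ =>
          Finset.single_le_sum (f := fun j' => |(u t j' : ℝ)|) (fun j' _ => abs_nonneg _) (Finset.mem_univ j)
      _ < 1 + ∑ t, ∑ j', |(u t j' : ℝ)| := by linarith
end

section
/- Let 0 ≤ a_1, ..., a_d ≤ n and let A_1, ..., A_d be independent uniformly random subsets of {1,...,n} with |A_i| = a_i. Then for every k > 0, P(| |A_1 ∩ ... ∩ A_d| − n·∏_{i=1}^d (a_i/n) | ≥ (d−1)k) ≤ 2(d−1) exp(−2k²/n). -/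
open Finset

set_option maxHeartbeats 1000000

/-- Weighted AM-GM: `y * x^(b-1) ≤ ((y + (b-1)x)/b)^b`. -/
lemma gm2 (b : ℕ) (hb : 1 ≤ b) (x y : ℝ) (hx : 0 ≤ x) (hy : 0 ≤ y) :
    y * x ^ (b - 1) ≤ ((y + ((b : ℝ) - 1) * x) / b) ^ b := by
  have hb0 : (0:ℝ) < b := by exact_mod_cast hb
  have hb1 : (1:ℝ) ≤ b := by exact_mod_cast hb
  set w₁ : ℝ := 1 / b with hw₁
  set w₂ : ℝ := ((b:ℝ) - 1) / b with hw₂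
  have hw₁0 : 0 ≤ w₁ := by positivity
  have hw₂0 : 0 ≤ w₂ := by rw [hw₂]; apply div_nonneg _ hb0.le; linarith
  have hsum : w₁ + w₂ = 1 := by rw [hw₁, hw₂]; field_simp; ring
  have hgm := Real.geom_mean_le_arith_mean2_weighted hw₁0 hw₂0 hy hx hsum
  have hgm0 : 0 ≤ y ^ w₁ * x ^ w₂ := by positivity
  have hpow := pow_le_pow_left₀ hgm0 hgm b
  have heq : (y ^ w₁ * x ^ w₂) ^ b = y * x ^ (b - 1) := by
    rw [mul_pow, ← Real.rpow_natCast (y ^ w₁) b, ← Real.rpow_natCast (x ^ w₂) b,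
      ← Real.rpow_mul hy, ← Real.rpow_mul hx]
    have h1 : w₁ * (b:ℝ) = 1 := by rw [hw₁]; field_simp
    have h2 : w₂ * (b:ℝ) = ((b - 1 : ℕ) : ℝ) := by
      rw [hw₂, Nat.cast_sub hb]
      push_cast
      field_simp
    rw [h1, h2, Real.rpow_one, Real.rpow_natCast]
  rw [heq] at hpow
  calc y * x ^ (b-1) ≤ (w₁ * y + w₂ * x) ^ b := hpow
    _ = ((y + ((b:ℝ) - 1) * x) / b) ^ b := by rw [hw₁, hw₂]; ring_nf

lemma phi_pos (q t : ℝ) (hq0 : 0 ≤ q) (hq1 : q ≤ 1) (ht : -1 < t) : 0 < 1 + q * t := by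
  rcases le_or_gt 0 t with h | h
  · nlinarith
  · nlinarith [mul_le_mul_of_nonpos_right hq1 h.le]

lemma key_ineq (N A : ℝ) (hA1 : 1 ≤ A) (hAN : A ≤ N - 1) (u : ℝ) (hu : 0 < u)
    (m : ℕ) (hm : (m:ℝ) + 1 ≤ N) :
    A/N * u * (1 + (A-1)/(N-1) * (u-1)) ^ m
      + (N-A)/N * (1 + A/(N-1) * (u-1)) ^ m
    ≤ (1 + A/N * (u-1)) ^ (m+1) := by
  have hN2 : (2:ℝ) ≤ N := by linarith
  set t := u - 1 with htdef
  have ht : -1 < t := by rw [htdef]; linarith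
  have hN0 : (0:ℝ) < N := by linarith
  have hN1 : (0:ℝ) < N - 1 := by linarith
  have hA0 : (0:ℝ) ≤ A := by linarith
  set φ := 1 + A/N * t with hφdef
  set φ₁ := 1 + (A-1)/(N-1) * t with hφ₁def
  set φ₂ := 1 + A/(N-1) * t with hφ₂def
  have hφ : 0 < φ := by
    apply phi_pos _ _ (by positivity) _ ht
    rw [div_le_one hN0]; linarith
  have hφ₁ : 0 < φ₁ := by
    apply phi_pos _ _ (by apply div_nonneg <;> linarith) _ ht
    rw [div_le_one hN1]; linarith
  have hφ₂ : 0 < φ₂ := by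
    apply phi_pos _ _ (by apply div_nonneg <;> linarith) _ ht
    rw [div_le_one hN1]; linarith
  induction m with
  | zero =>
    simp only [pow_zero, pow_one, mul_one]
    have : A/N * u + (N-A)/N = 1 + A/N * t := by
      rw [htdef]; field_simp; ring
    rw [hφdef]; linarith [this]
  | succ m ih =>
    have hmN : (m:ℝ) + 2 ≤ N := by push_cast at hm; linarith
    have IH := ih (by linarith)
    have hm0 : (0:ℝ) ≤ m := Nat.cast_nonneg m
    rcases le_or_gt 0 t with htp | htn
    · -- t ≥ 0 case
      have factA : φ₂ ^ m ≤ φ ^ (m+1) := by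
        have h := gm2 (m+1) (by omega) φ₂ 1 hφ₂.le zero_le_one
        simp only [Nat.add_sub_cancel, one_mul, Nat.cast_add, Nat.cast_one,
          add_sub_cancel_right] at h
        have hbase : (1 + (m:ℝ) * φ₂) / ((m:ℝ)+1) ≤ φ := by
          rw [div_le_iff₀ (by positivity)]
          have e1 : A/(N-1) * t * (m:ℝ) ≤ A/N * t * ((m:ℝ)+1) := by
            have h0 : A/(N-1) * t * (m:ℝ) = (A * t * (m:ℝ))/(N-1) := by ring
            have h1 : A/N * t * ((m:ℝ)+1) = (A * t * ((m:ℝ)+1))/N := by ring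
            rw [h0, h1, div_le_div_iff₀ hN1 hN0]
            nlinarith [mul_nonneg (mul_nonneg hA0 htp) (by linarith : (0:ℝ) ≤ N - (m:ℝ) - 1)]
          rw [hφ₂def, hφdef]
          nlinarith [e1]
        calc φ₂ ^ m ≤ ((1 + (m:ℝ) * φ₂) / ((m:ℝ)+1)) ^ (m+1) := h
          _ ≤ φ ^ (m+1) := pow_le_pow_left₀ (by positivity) hbase _
      have h21 : φ₂ = φ₁ + t/(N-1) := by
        rw [hφ₁def, hφ₂def]; field_simp; try ring
      have hphisum : φ₁ + (N-A)/N * (t/(N-1)) = φ := by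
        rw [hφ₁def, hφdef]; field_simp; try ring
      have hc : 0 ≤ (N-A)/N * (t/(N-1)) := by
        apply mul_nonneg
        · apply div_nonneg _ hN0.le; linarith
        · positivity
      calc A/N * u * φ₁ ^ (m+1) + (N-A)/N * φ₂ ^ (m+1)
          = φ₁ * (A/N * u * φ₁ ^ m + (N-A)/N * φ₂ ^ m)
            + (N-A)/N * (t/(N-1)) * φ₂ ^ m := by
            rw [pow_succ, pow_succ, h21]; ring
        _ ≤ φ₁ * φ ^ (m+1) + (N-A)/N * (t/(N-1)) * φ ^ (m+1) :=
            add_le_add (mul_le_mul_of_nonneg_left IH hφ₁.le)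
              (mul_le_mul_of_nonneg_left factA hc)
        _ = (φ₁ + (N-A)/N * (t/(N-1))) * φ ^ (m+1) := by ring
        _ = φ ^ (m+1+1) := by rw [hphisum, pow_succ]; ring
    · -- t < 0 case
      have factB : u * φ₁ ^ m ≤ φ ^ (m+1) := by
        have h := gm2 (m+1) (by omega) φ₁ u hφ₁.le hu.le
        simp only [Nat.add_sub_cancel, Nat.cast_add, Nat.cast_one,
          add_sub_cancel_right] at h
        have hbase : (u + (m:ℝ) * φ₁) / ((m:ℝ)+1) ≤ φ := by
          rw [div_le_iff₀ (by positivity)]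
          have e1 : t * (1 + (A-1)/(N-1) * (m:ℝ)) ≤ A/N * t * ((m:ℝ)+1) := by
            have h0 : t * (1 + (A-1)/(N-1) * (m:ℝ)) = (t * ((N-1) + (A-1)*(m:ℝ)))/(N-1) := by
              field_simp; try ring
            have h1 : A/N * t * ((m:ℝ)+1) = (A * t * ((m:ℝ)+1))/N := by ring
            rw [h0, h1, div_le_div_iff₀ hN1 hN0]
            nlinarith [mul_nonneg (mul_nonneg (by linarith : (0:ℝ) ≤ -t) (by linarith : (0:ℝ) ≤ N - A)) (by linarith : (0:ℝ) ≤ N - (m:ℝ) - 1)]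
          have hu' : u = 1 + t := by rw [htdef]; ring
          rw [hφ₁def, hφdef, hu']
          nlinarith [e1]
        calc u * φ₁ ^ m
            ≤ ((u + (m:ℝ) * φ₁) / ((m:ℝ)+1)) ^ (m+1) := h
          _ ≤ φ ^ (m+1) := pow_le_pow_left₀ (by positivity) hbase _
      have h12 : φ₁ = φ₂ + (-t)/(N-1) := by
        rw [hφ₁def, hφ₂def]; field_simp; try ring
      have hphisum : φ₂ + A/N * ((-t)/(N-1)) = φ := by
        rw [hφ₂def, hφdef]; field_simp; try ring
      calc A/N * u * φ₁ ^ (m+1) + (N-A)/N * φ₂ ^ (m+1)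
          = φ₂ * (A/N * u * φ₁ ^ m + (N-A)/N * φ₂ ^ m)
            + A/N * ((-t)/(N-1)) * (u * φ₁ ^ m) := by
            rw [pow_succ, pow_succ, h12]; ring
        _ ≤ φ₂ * φ ^ (m+1) + A/N * ((-t)/(N-1)) * φ ^ (m+1) :=
            add_le_add (mul_le_mul_of_nonneg_left IH hφ₂.le)
              (mul_le_mul_of_nonneg_left factB
                (mul_nonneg (by positivity)
                  (div_nonneg (by linarith) hN1.le)))
        _ = (φ₂ + A/N * ((-t)/(N-1))) * φ ^ (m+1) := by ring
        _ = φ ^ (m+1+1) := by rw [hphisum, pow_succ]; ring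
set_option maxHeartbeats 1000000

lemma bern_core (p : ℝ) (hp0 : 0 < p) (hp1 : p < 1) (t : ℝ) :
    Real.log (1 - p + p * Real.exp t) ≤ p * t + t ^ 2 / 8 := by
  set φ : ℝ → ℝ := fun s => 1 - p + p * Real.exp s with hφ
  have hφpos : ∀ s, 0 < φ s := fun s => by
    have := Real.exp_pos s
    simp only [hφ]; nlinarith
  have hφd : ∀ s, HasDerivAt φ (p * Real.exp s) s := fun s => by
    exact ((Real.hasDerivAt_exp s).const_mul p).const_add (1 - p)
  set h1 : ℝ → ℝ := fun s => p + s / 4 - p * Real.exp s / φ s with hh1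
  have hh1d : ∀ s, HasDerivAt h1
      (1 / 4 - (p * Real.exp s * φ s - p * Real.exp s * (p * Real.exp s)) / (φ s) ^ 2) s :=
    fun s => by
    have d1 : HasDerivAt (fun s => p * Real.exp s) (p * Real.exp s) s :=
      (Real.hasDerivAt_exp s).const_mul p
    have d2 := d1.div (hφd s) (hφpos s).ne'
    have d3 : HasDerivAt (fun s : ℝ => p + s / 4) (1 / 4) s := by
      simpa using ((hasDerivAt_id s).div_const 4).const_add p
    exact d3.sub d2
  have hh1d' : ∀ s, HasDerivAt h1 (1 / 4 - p * (1 - p) * Real.exp s / (φ s) ^ 2) s := by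
    intro s
    convert hh1d s using 2
    simp only [hφ]; ring
  have h1diff : Differentiable ℝ h1 := fun s => (hh1d' s).differentiableAt
  have h1mono : Monotone h1 := by
    apply monotone_of_deriv_nonneg h1diff
    intro s
    rw [(hh1d' s).deriv]
    have hsq : 0 < (φ s) ^ 2 := pow_pos (hφpos s) 2
    have hφs : φ s = 1 - p + p * Real.exp s := rfl
    have : p * (1 - p) * Real.exp s / (φ s) ^ 2 ≤ 1 / 4 := by
      rw [div_le_iff₀ hsq, hφs]
      nlinarith [sq_nonneg (1 - p - p * Real.exp s)]
    linarith
  have h10 : h1 0 = 0 := by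
    simp only [hh1, hφ, Real.exp_zero, mul_one]
    have : 1 - p + p = 1 := by ring
    rw [this]
    simp
  set h : ℝ → ℝ := fun s => p * s + s ^ 2 / 8 - Real.log (φ s) with hh
  have hhd : ∀ s, HasDerivAt h (h1 s) s := fun s => by
    have dlog : HasDerivAt (fun s => Real.log (φ s)) (p * Real.exp s / φ s) s :=
      (hφd s).log (hφpos s).ne'
    have dpoly : HasDerivAt (fun s : ℝ => p * s + s ^ 2 / 8) (p + s / 4) s := by
      have d1 : HasDerivAt (fun s : ℝ => p * s) p s := by
        simpa using (hasDerivAt_id s).const_mul p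
      have d2 : HasDerivAt (fun s : ℝ => s ^ 2 / 8) (2 * s ^ 1 / 8) s :=
        (hasDerivAt_pow 2 s).div_const 8
      exact (d1.add d2 : HasDerivAt (fun s : ℝ => p * s + s ^ 2 / 8) _ s).congr_deriv (by ring)
    exact dpoly.sub dlog
  have hdiff : Differentiable ℝ h := fun s => (hhd s).differentiableAt
  have h0 : h 0 = 0 := by
    simp only [hh, hφ, Real.exp_zero, mul_one, mul_zero]
    have : 1 - p + p = 1 := by ring
    rw [this]
    simp
  have goal : 0 ≤ h t := by
    rcases le_or_gt 0 t with htp | htn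
    · have mono : MonotoneOn h (Set.Ici 0) := by
        apply monotoneOn_of_deriv_nonneg (convex_Ici 0) hdiff.continuous.continuousOn
          hdiff.differentiableOn
        intro x hx
        rw [interior_Ici] at hx
        rw [(hhd x).deriv]
        have := h1mono (le_of_lt hx)
        rw [h10] at this
        exact this
      have := mono (Set.mem_Ici.2 le_rfl) (Set.mem_Ici.2 htp) htp
      rw [h0] at this
      exact this
    · have anti : AntitoneOn h (Set.Iic 0) := by
        apply antitoneOn_of_deriv_nonpos (convex_Iic 0) hdiff.continuous.continuousOn
          hdiff.differentiableOn
        intro x hx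
        rw [interior_Iic] at hx
        rw [(hhd x).deriv]
        have := h1mono (le_of_lt hx)
        rw [h10] at this
        exact this
      have := anti (Set.mem_Iic.2 htn.le) (Set.mem_Iic.2 le_rfl) htn.le
      rw [h0] at this
      exact this
  simp only [hh] at goal
  linarith

lemma bern (p t : ℝ) (hp0 : 0 ≤ p) (hp1 : p ≤ 1) :
    1 + p * (Real.exp t - 1) ≤ Real.exp (p * t + t ^ 2 / 8) := by
  rcases eq_or_lt_of_le hp0 with h0 | h0
  · rw [← h0]
    simpa using Real.one_le_exp (by positivity)
  rcases eq_or_lt_of_le hp1 with h1 | h1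
  · rw [h1]
    have : 1 + 1 * (Real.exp t - 1) = Real.exp t := by ring
    rw [this]
    apply Real.exp_le_exp.2
    nlinarith [sq_nonneg t]
  have hpos : 0 < 1 - p + p * Real.exp t := by
    have := Real.exp_pos t
    nlinarith
  have : 1 + p * (Real.exp t - 1) = 1 - p + p * Real.exp t := by ring
  rw [this, ← Real.exp_log hpos]
  exact Real.exp_le_exp.2 (bern_core p h0 h1 t)

open Finset in
lemma mgf_le {α : Type*} [DecidableEq α] (u : ℝ) (hu : 0 < u) :
    ∀ (b : ℕ) (S B : Finset α) (aa : ℕ), B ⊆ S → B.card = b →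
    (∑ A ∈ S.powersetCard aa, u ^ (A ∩ B).card)
      ≤ (S.card.choose aa : ℝ) * (1 + (aa:ℝ)/(S.card:ℝ) * (u - 1)) ^ b := by
  intro b
  induction b with
  | zero =>
    intro S B aa hBS hB
    rw [Finset.card_eq_zero] at hB
    subst hB
    simp only [Finset.inter_empty, Finset.card_empty, pow_zero, mul_one]
    rw [Finset.sum_const, Finset.card_powersetCard]
    simp
  | succ b IH =>
    intro S B aa hBS hB
    have hBne : B.Nonempty := by
      rw [← Finset.card_pos, hB]; omega
    obtain ⟨j, hj⟩ := hBne
    have hjS : j ∈ S := hBS hj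
    set S' := S.erase j with hS'def
    set B' := B.erase j with hB'def
    have hjS' : j ∉ S' := Finset.notMem_erase j S
    have hjB' : j ∉ B' := Finset.notMem_erase j B
    have hS : S = insert j S' := (Finset.insert_erase hjS).symm
    have hBins : B = insert j B' := (Finset.insert_erase hj).symm
    have hB'S' : B' ⊆ S' := Finset.erase_subset_erase j hBS
    have hB'card : B'.card = b := by
      rw [hB'def, Finset.card_erase_of_mem hj, hB]
      omega
    set n' := S'.card with hn'def
    have hn : S.card = n' + 1 := by
      rw [hS, Finset.card_insert_of_notMem hjS']
    have hSpos : 1 ≤ S.card := by omega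
    have hb1n : b + 1 ≤ S.card := by
      rw [← hB]; exact Finset.card_le_card hBS
    rcases Nat.eq_zero_or_pos aa with rfl | haa1
    · simp
    rcases lt_trichotomy S.card aa with hlt | heq | hgt
    · rw [Finset.powersetCard_eq_empty.2 hlt, Finset.sum_empty,
        Nat.choose_eq_zero_of_lt hlt]
      simp
    · subst heq
      rw [Finset.powersetCard_self, Finset.sum_singleton, Nat.choose_self]
      have hSB : S ∩ B = B := Finset.inter_eq_right.2 hBS
      have hc : ((S.card : ℕ) : ℝ) ≠ 0 := Nat.cast_ne_zero.2 (by omega)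
      rw [hSB, hB, div_self hc]
      simp
    · -- main case : 1 ≤ aa < S.card
      obtain ⟨a', rfl⟩ : ∃ a', aa = a' + 1 := ⟨aa - 1, by omega⟩
      have haan : a' + 1 + 1 ≤ S.card := by omega
      have hsplit : S.powersetCard (a' + 1) =
          (S'.powersetCard (a' + 1)) ∪ (S'.powersetCard a').image (insert j) := by
        rw [hS]; exact Finset.powersetCard_succ_insert hjS' a'
      have hdisj : Disjoint (S'.powersetCard (a' + 1))
          ((S'.powersetCard a').image (insert j)) := by
        rw [Finset.disjoint_left]
        intro A hA hA2
        obtain ⟨A', hA', rfl⟩ := Finset.mem_image.1 hA2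
        exact hjS' ((Finset.mem_powersetCard.1 hA).1 (Finset.mem_insert_self j A'))
      rw [hsplit, Finset.sum_union hdisj]
      have hsum1 : ∑ A ∈ S'.powersetCard (a' + 1), u ^ (A ∩ B).card
          = ∑ A ∈ S'.powersetCard (a' + 1), u ^ (A ∩ B').card := by
        apply Finset.sum_congr rfl
        intro A hA
        have hjA : j ∉ A := fun h => hjS' ((Finset.mem_powersetCard.1 hA).1 h)
        rw [hBins, Finset.inter_insert_of_notMem hjA]
      have hsum2 : ∑ A ∈ (S'.powersetCard a').image (insert j), u ^ (A ∩ B).card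
          = u * ∑ A ∈ S'.powersetCard a', u ^ (A ∩ B').card := by
        rw [Finset.sum_image]
        · rw [Finset.mul_sum]
          apply Finset.sum_congr rfl
          intro A hA
          have hjA : j ∉ A := fun h => hjS' ((Finset.mem_powersetCard.1 hA).1 h)
          rw [Finset.insert_inter_of_mem hj, hBins,
            Finset.inter_insert_of_notMem hjA,
            Finset.card_insert_of_notMem (fun h => hjA (Finset.mem_inter.1 h).1),
            pow_succ]
          ring
        · intro x hx y hy hxy
          have hjx : j ∉ x := fun h => hjS' ((Finset.mem_powersetCard.1 hx).1 h)
          have hjy : j ∉ y := fun h => hjS' ((Finset.mem_powersetCard.1 hy).1 h)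
          have := congrArg (fun s => Finset.erase s j) hxy
          simpa [Finset.erase_insert hjx, Finset.erase_insert hjy] using this
      rw [hsum1, hsum2]
      have IH1 := IH S' B' (a' + 1) hB'S' hB'card
      have IH2 := IH S' B' a' hB'S' hB'card
      have hn'cast : (n' : ℝ) = ((S.card : ℕ) : ℝ) - 1 := by
        rw [hn]; push_cast; ring
      have hkey := key_ineq ((S.card : ℕ) : ℝ) ((a' : ℝ) + 1) (by linarith [Nat.cast_nonneg (α := ℝ) a'])
        (by
          have : ((a' : ℝ) + 1) + 1 ≤ ((S.card : ℕ) : ℝ) := by exact_mod_cast haan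
          linarith)
        u hu b
        (by exact_mod_cast hb1n)
      have ha1e : ((a' : ℝ) + 1) - 1 = (a' : ℝ) := by ring
      rw [ha1e, ← hn'cast] at hkey
      -- choose identities
      have hch : (n' + 1).choose (a' + 1) = S.card.choose (a' + 1) := by rw [hn]
      have hc1 : (n' + 1) * n'.choose a' = S.card.choose (a' + 1) * (a' + 1) := by
        rw [← hch]
        simpa using Nat.add_one_mul_choose_eq n' a'
      have hc2 : n'.choose a' + n'.choose (a' + 1) = S.card.choose (a' + 1) := by
        rw [← hch]
        exact (Nat.choose_succ_succ n' a').symm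
      have hNpos : (0:ℝ) < ((S.card : ℕ) : ℝ) := by
        exact_mod_cast hSpos
      have hScast : ((S.card : ℕ) : ℝ) = (n' : ℝ) + 1 := by
        rw [hn]; push_cast; ring
      have e1 : (n'.choose a' : ℝ)
          = (S.card.choose (a' + 1) : ℝ) * ((a' : ℝ) + 1) / ((S.card : ℕ) : ℝ) := by
        have h := congrArg (fun x : ℕ => (x : ℝ)) hc1
        push_cast at h
        rw [eq_div_iff hNpos.ne', hScast]
        linarith
      have e2 : (n'.choose (a' + 1) : ℝ)
          = (S.card.choose (a' + 1) : ℝ) * (((S.card : ℕ) : ℝ) - ((a' : ℝ) + 1)) / ((S.card : ℕ) : ℝ) := by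
        have h1 := congrArg (fun x : ℕ => (x : ℝ)) hc1
        have h2 := congrArg (fun x : ℕ => (x : ℝ)) hc2
        push_cast at h1 h2
        rw [eq_div_iff hNpos.ne', hScast]
        linear_combination ((n' : ℝ) + 1) * h2 - h1
      have hC0 : (0:ℝ) ≤ (S.card.choose (a' + 1) : ℝ) := by positivity
      push_cast at IH1 IH2 ⊢
      calc (∑ A ∈ S'.powersetCard (a' + 1), u ^ (A ∩ B').card)
            + u * ∑ A ∈ S'.powersetCard a', u ^ (A ∩ B').card
          ≤ (n'.choose (a'+1) : ℝ) * (1 + ((a':ℝ)+1)/(n':ℝ) * (u - 1)) ^ b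
            + u * ((n'.choose a' : ℝ) * (1 + (a':ℝ)/(n':ℝ) * (u - 1)) ^ b) :=
            add_le_add IH1 (mul_le_mul_of_nonneg_left IH2 hu.le)
        _ = (S.card.choose (a' + 1) : ℝ) *
              (((a':ℝ)+1)/((S.card : ℕ) : ℝ) * u * (1 + (a':ℝ)/(n':ℝ) * (u - 1)) ^ b
               + (((S.card : ℕ) : ℝ) - ((a':ℝ)+1))/((S.card : ℕ) : ℝ)
                  * (1 + ((a':ℝ)+1)/(n':ℝ) * (u - 1)) ^ b) := by
            rw [e1, e2]
            ring
        _ ≤ (S.card.choose (a' + 1) : ℝ) * (1 + ((a':ℝ)+1)/((S.card : ℕ) : ℝ) * (u - 1)) ^ (b+1) :=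
            mul_le_mul_of_nonneg_left hkey hC0

open Classical in
lemma chernoff_upper (n aa : ℕ) (hn : 1 ≤ n) (han : aa ≤ n) (B : Finset (Fin n))
    (k : ℝ) (hk : 0 < k) :
    (((Finset.univ.powersetCard aa).filter
        (fun A : Finset (Fin n) => (aa:ℝ) * B.card / n + k ≤ ((A ∩ B).card : ℝ))).card : ℝ)
      ≤ (n.choose aa : ℝ) * Real.exp (-2 * k ^ 2 / n) := by
  have hn0 : (0:ℝ) < n := by exact_mod_cast hn
  set lam : ℝ := 4 * k / n with hlam
  have hlam0 : 0 < lam := by positivity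
  set u : ℝ := Real.exp lam with hudef
  have hu : 0 < u := Real.exp_pos lam
  set X : Finset (Fin n) → ℕ := fun A => (A ∩ B).card with hX
  set m : ℝ := (aa:ℝ) * B.card / n with hm
  set F := (Finset.univ.powersetCard aa).filter
      (fun A : Finset (Fin n) => m + k ≤ ((X A : ℕ) : ℝ)) with hFdef
  have hb : (B.card : ℝ) ≤ n := by
    have := Finset.card_le_univ B
    simp only [Finset.card_univ, Fintype.card_fin] at this
    exact_mod_cast this
  have step1 : (F.card : ℝ) ≤ ∑ A ∈ F, Real.exp (-(lam * (m + k))) * u ^ X A := by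
    have hcard : (F.card : ℝ) = ∑ _A ∈ F, (1:ℝ) := by simp
    rw [hcard]
    apply Finset.sum_le_sum
    intro A hA
    have hAX : m + k ≤ ((X A : ℕ) : ℝ) := (Finset.mem_filter.1 hA).2
    have hexp : Real.exp (-(lam * (m + k))) * u ^ X A
        = Real.exp (((X A : ℕ):ℝ) * lam - lam * (m + k)) := by
      rw [hudef, ← Real.exp_nat_mul, ← Real.exp_add]
      ring_nf
    rw [hexp]
    apply Real.one_le_exp
    nlinarith [mul_nonneg hlam0.le (sub_nonneg.2 hAX)]
  have step2 : ∑ A ∈ F, Real.exp (-(lam * (m + k))) * u ^ X A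
      ≤ Real.exp (-(lam * (m + k))) * ∑ A ∈ Finset.univ.powersetCard aa, u ^ X A := by
    rw [Finset.mul_sum]
    apply Finset.sum_le_sum_of_subset_of_nonneg (Finset.filter_subset _ _)
    intro A _ _
    positivity
  have hmgf := mgf_le u hu B.card Finset.univ B aa (Finset.subset_univ B) rfl
  have hcu : (Finset.univ : Finset (Fin n)).card = n := by simp
  rw [hcu] at hmgf
  -- bernoulli bound
  have hp0 : (0:ℝ) ≤ (aa:ℝ)/n := by positivity
  have hp1 : (aa:ℝ)/n ≤ 1 := by
    rw [div_le_one hn0]; exact_mod_cast han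
  have hbern := bern ((aa:ℝ)/n) lam hp0 hp1
  have hphinn : (0:ℝ) ≤ 1 + (aa:ℝ)/n * (u - 1) := by
    have := phi_pos ((aa:ℝ)/n) (u - 1) hp0 hp1 (by linarith)
    linarith
  have hpow : (1 + (aa:ℝ)/n * (u - 1)) ^ B.card
      ≤ Real.exp ((B.card : ℝ) * ((aa:ℝ)/n * lam + lam ^ 2 / 8)) := by
    calc (1 + (aa:ℝ)/n * (u - 1)) ^ B.card
        ≤ (Real.exp ((aa:ℝ)/n * lam + lam ^ 2 / 8)) ^ B.card := by
          apply pow_le_pow_left₀ hphinn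
          rw [hudef]
          exact hbern
      _ = Real.exp ((B.card : ℝ) * ((aa:ℝ)/n * lam + lam ^ 2 / 8)) := by
          rw [← Real.exp_nat_mul]
  have hE : Real.exp (-(lam * (m + k)))
        * Real.exp ((B.card : ℝ) * ((aa:ℝ)/n * lam + lam ^ 2 / 8))
      ≤ Real.exp (-2 * k ^ 2 / n) := by
    rw [← Real.exp_add]
    apply Real.exp_le_exp.2
    rw [hm, hlam]
    have hn2 : (0:ℝ) < (n:ℝ)^2 := by positivity
    have key : 2 * (B.card : ℝ) * k ^ 2 / (n:ℝ)^2 ≤ 2 * k ^ 2 / n := by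
      rw [div_le_div_iff₀ hn2 hn0]
      nlinarith [mul_nonneg (mul_nonneg (by norm_num : (0:ℝ) ≤ 2) (sq_nonneg k)) (sub_nonneg.2 hb), hn0]
    have expand : -(4 * k / n * ((aa:ℝ) * B.card / n + k))
          + (B.card : ℝ) * ((aa:ℝ)/n * (4 * k / n) + (4 * k / n) ^ 2 / 8)
        = 2 * (B.card : ℝ) * k ^ 2 / (n:ℝ)^2 - 4 * k ^ 2 / n := by
      field_simp
      ring
    rw [expand]
    have : -2 * k^2 / n = 2 * k^2/n - 4 * k^2/n := by ring
    rw [this]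
    linarith [key]
  calc (F.card : ℝ)
      ≤ Real.exp (-(lam * (m + k))) * ∑ A ∈ Finset.univ.powersetCard aa, u ^ X A :=
        le_trans step1 step2
    _ ≤ Real.exp (-(lam * (m + k))) * ((n.choose aa : ℝ) * (1 + (aa:ℝ)/n * (u - 1)) ^ B.card) := by
        apply mul_le_mul_of_nonneg_left hmgf (Real.exp_pos _).le
    _ ≤ Real.exp (-(lam * (m + k))) * ((n.choose aa : ℝ)
          * Real.exp ((B.card : ℝ) * ((aa:ℝ)/n * lam + lam ^ 2 / 8))) := by
        apply mul_le_mul_of_nonneg_left _ (Real.exp_pos _).le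
        exact mul_le_mul_of_nonneg_left hpow (by positivity)
    _ = (n.choose aa : ℝ) * (Real.exp (-(lam * (m + k)))
          * Real.exp ((B.card : ℝ) * ((aa:ℝ)/n * lam + lam ^ 2 / 8))) := by ring
    _ ≤ (n.choose aa : ℝ) * Real.exp (-2 * k ^ 2 / n) :=
        mul_le_mul_of_nonneg_left hE (by positivity)

open Classical in
lemma chernoff_two (n aa : ℕ) (hn : 1 ≤ n) (han : aa ≤ n) (B : Finset (Fin n))
    (k : ℝ) (hk : 0 < k) :
    (((Finset.univ.powersetCard aa).filter
        (fun A : Finset (Fin n) => k ≤ |((A ∩ B).card : ℝ) - (aa:ℝ) * B.card / n|)).card : ℝ)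
      ≤ 2 * (n.choose aa : ℝ) * Real.exp (-2 * k ^ 2 / n) := by
  have hn0 : (0:ℝ) < n := by exact_mod_cast hn
  have hb : (B.card : ℝ) ≤ n := by
    have := Finset.card_le_univ B
    simp only [Finset.card_univ, Fintype.card_fin] at this
    exact_mod_cast this
  set F1 := (Finset.univ.powersetCard aa).filter
      (fun A : Finset (Fin n) => (aa:ℝ) * B.card / n + k ≤ ((A ∩ B).card : ℝ)) with hF1
  set F2 := (Finset.univ.powersetCard aa).filter
      (fun A : Finset (Fin n) => (aa:ℝ) * Bᶜ.card / n + k ≤ ((A ∩ Bᶜ).card : ℝ)) with hF2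
  have hsub : (Finset.univ.powersetCard aa).filter
      (fun A : Finset (Fin n) => k ≤ |((A ∩ B).card : ℝ) - (aa:ℝ) * B.card / n|) ⊆ F1 ∪ F2 := by
    intro A hA
    obtain ⟨hApc, habs⟩ := Finset.mem_filter.1 hA
    have hcardA : A.card = aa := (Finset.mem_powersetCard.1 hApc).2
    rcases le_abs.1 habs with h1 | h1
    · apply Finset.mem_union_left
      rw [hF1, Finset.mem_filter]
      exact ⟨hApc, by linarith⟩
    · apply Finset.mem_union_right
      rw [hF2, Finset.mem_filter]
      refine ⟨hApc, ?_⟩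
      have hcompl : (A ∩ Bᶜ).card + (A ∩ B).card = aa := by
        have h := Finset.card_inter_add_card_sdiff A B
        rw [hcardA] at h
        have hACB : A ∩ Bᶜ = A \ B := by
          ext x
          simp
        rw [hACB, ← h, add_comm]
      have hBc : (Bᶜ.card : ℝ) = (n:ℝ) - B.card := by
        rw [Finset.card_compl]
        have : B.card ≤ Fintype.card (Fin n) := Finset.card_le_univ B |>.trans_eq (by simp)
        push_cast [Nat.cast_sub this]
        simp
      have hcompl' : ((A ∩ Bᶜ).card : ℝ) = (aa:ℝ) - ((A ∩ B).card : ℝ) := by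
        have := congrArg (fun x : ℕ => (x:ℝ)) hcompl
        push_cast at this
        linarith
      rw [hcompl', hBc]
      have expand : (aa:ℝ) * ((n:ℝ) - B.card) / n = aa - (aa:ℝ) * B.card / n := by
        field_simp
      rw [expand]
      linarith
  calc ((((Finset.univ.powersetCard aa).filter
        (fun A : Finset (Fin n) => k ≤ |((A ∩ B).card : ℝ) - (aa:ℝ) * B.card / n|)).card : ℕ) : ℝ)
      ≤ ((F1 ∪ F2).card : ℝ) := by
        exact_mod_cast Finset.card_le_card hsub
    _ ≤ ((F1.card + F2.card : ℕ) : ℝ) := by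
        exact_mod_cast Finset.card_union_le F1 F2
    _ = (F1.card : ℝ) + (F2.card : ℝ) := by push_cast; ring
    _ ≤ (n.choose aa : ℝ) * Real.exp (-2 * k ^ 2 / n)
        + (n.choose aa : ℝ) * Real.exp (-2 * k ^ 2 / n) := by
        apply add_le_add
        · exact chernoff_upper n aa hn han B k hk
        · exact chernoff_upper n aa hn han Bᶜ k hk
    _ = 2 * (n.choose aa : ℝ) * Real.exp (-2 * k ^ 2 / n) := by ring
open Finset

-- transport filter-card along an equivalence
lemma card_filter_equiv {α β : Type*} [Fintype α] [Fintype β]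
    (e : α ≃ β) (P : α → Prop) [DecidablePred P] [DecidablePred (fun b => P (e.symm b))] :
    (Finset.univ.filter P).card = (Finset.univ.filter (fun b => P (e.symm b))).card := by
  apply Finset.card_nbij (fun A => e A)
  · intro A hA
    simp only [Finset.mem_filter, Finset.mem_univ, true_and] at *
    simpa using hA
  · intro A hA A' hA' h
    exact e.injective h
  · intro b hb
    refine ⟨e.symm b, ?_, by simp⟩
    simp only [Finset.mem_coe, Finset.mem_filter, Finset.mem_univ, true_and] at *
    exact hb

lemma card_filter_prod {γ δ : Type*} [Fintype γ] [Fintype δ] [DecidableEq δ]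
    (Q : γ × δ → Prop) [DecidablePred Q] (R : δ → Prop) [DecidablePred R]
    (C : ℝ) (hC : 0 ≤ C)
    (h0 : ∀ x : δ, ¬ R x → (Finset.univ.filter (fun c : γ => Q (c, x))) = ∅)
    (h : ∀ x : δ, R x → ((Finset.univ.filter (fun c : γ => Q (c, x))).card : ℝ) ≤ C) :
    ((Finset.univ.filter Q).card : ℝ) ≤ C * (Finset.univ.filter R).card := by
  have hfib : (Finset.univ.filter Q).card
      = ∑ x : δ, (Finset.univ.filter (fun c : γ => Q (c, x))).card := by
    rw [Finset.card_eq_sum_card_fiberwise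
      (f := Prod.snd) (t := Finset.univ) (fun _ _ => Finset.mem_univ _)]
    apply Finset.sum_congr rfl
    intro x _
    apply Finset.card_nbij' (fun p => p.1) (fun c => (c, x))
    · intro p hp
      simp only [Finset.mem_coe, Finset.mem_filter, Finset.mem_univ, true_and] at *
      obtain ⟨hQ, hsnd⟩ := hp
      rwa [← hsnd, Prod.mk.eta] at *
      
    · intro c hc
      simp only [Finset.mem_coe, Finset.mem_filter, Finset.mem_univ, true_and] at *
      exact ⟨hc, trivial⟩
    · intro p hp
      simp only [Finset.mem_coe, Finset.mem_filter, Finset.mem_univ, true_and] at hp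
      simp [← hp.2]
    · intro c hc
      simp
  rw [hfib]
  push_cast
  calc ∑ x : δ, ((Finset.univ.filter (fun c : γ => Q (c, x))).card : ℝ)
      = ∑ x ∈ Finset.univ.filter R, ((Finset.univ.filter (fun c : γ => Q (c, x))).card : ℝ)
        + ∑ x ∈ Finset.univ.filter (fun x => ¬ R x), ((Finset.univ.filter (fun c : γ => Q (c, x))).card : ℝ) :=
        (Finset.sum_filter_add_sum_filter_not _ _ _).symm
    _ = ∑ x ∈ Finset.univ.filter R, ((Finset.univ.filter (fun c : γ => Q (c, x))).card : ℝ) := by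
        have hz : ∑ x ∈ Finset.univ.filter (fun x => ¬ R x),
            ((Finset.univ.filter (fun c : γ => Q (c, x))).card : ℝ) = 0 :=
          Finset.sum_eq_zero (fun x hx => by rw [h0 x (Finset.mem_filter.1 hx).2]; simp)
        rw [hz, add_zero]
    _ ≤ ∑ x ∈ Finset.univ.filter R, C := by
        apply Finset.sum_le_sum
        intro x hx
        exact h x (Finset.mem_filter.1 hx).2
    _ = C * (Finset.univ.filter R).card := by
        rw [Finset.sum_const, nsmul_eq_mul, mul_comm]

-- counting tuples with fixed coordinate cards
lemma card_filter_tuples {ι : Type*} [Fintype ι] [DecidableEq ι] (n : ℕ) (a : ι → ℕ)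
    [DecidablePred (fun x : ι → Finset (Fin n) => ∀ i, (x i).card = a i)] :
    ((Finset.univ.filter (fun x : ι → Finset (Fin n) => ∀ i, (x i).card = a i)).card : ℕ)
      = ∏ i, n.choose (a i) := by
  rw [← Fintype.card_subtype]
  rw [Fintype.card_congr (Equiv.subtypePiEquivPi (p := fun i (s : Finset (Fin n)) => s.card = a i))]
  rw [Fintype.card_pi]
  apply Finset.prod_congr rfl
  intro i _
  rw [Fintype.card_finset_len]
  simp

example (j : Fin 5) (c : Finset (Fin 3)) (x : {i : Fin 5 // i ≠ j} → Finset (Fin 3)) (i : Fin 5) (h : i ≠ j) :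
    (Equiv.funSplitAt j (Finset (Fin 3))).symm (c, x) i = x ⟨i, h⟩ := by
  simp [Equiv.funSplitAt, Equiv.piSplitAt, dif_neg h]

example (j : Fin 5) (c : Finset (Fin 3)) (x : {i : Fin 5 // i ≠ j} → Finset (Fin 3)) :
    (Equiv.funSplitAt j (Finset (Fin 3))).symm (c, x) j = c := by
  simp [Equiv.funSplitAt, Equiv.piSplitAt]

def capN {n d : ℕ} (A : Fin d → Finset (Fin n)) (m : ℕ) : Finset (Fin n) :=
  (Finset.univ.filter (fun i : Fin d => (i : ℕ) ≤ m)).inf A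

def aNfun (d : ℕ) (a : Fin d → ℕ) : ℕ → ℕ := fun l => if h : l < d then a ⟨l, h⟩ else 0

lemma aNfun_eq (d : ℕ) (a : Fin d → ℕ) (l : ℕ) (h : l < d) : aNfun d a l = a ⟨l, h⟩ := by
  simp [aNfun, dif_pos h]

lemma filter_le_zero {d : ℕ} (hd : 0 < d) :
    (Finset.univ.filter (fun i : Fin d => (i : ℕ) ≤ 0)) = {⟨0, hd⟩} := by
  ext i
  simp [Fin.ext_iff]

lemma filter_le_succ {d : ℕ} (mm : ℕ) (h1 : 1 ≤ mm) (h2 : mm < d) :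
    (Finset.univ.filter (fun i : Fin d => (i : ℕ) ≤ mm))
      = insert ⟨mm, h2⟩ ((Finset.univ.filter (fun i : Fin d => (i : ℕ) ≤ mm - 1))) := by
  ext i
  simp only [Finset.mem_filter, Finset.mem_univ, true_and, Finset.mem_insert, Fin.ext_iff]
  omega

lemma filter_le_last {d : ℕ} (m : ℕ) (hm : d - 1 ≤ m) :
    (Finset.univ.filter (fun i : Fin d => (i : ℕ) ≤ m)) = Finset.univ := by
  ext i
  simp only [Finset.mem_filter, Finset.mem_univ, true_and, iff_true]
  have := i.2
  omega

lemma cap_zero {n d : ℕ} (hd : 0 < d) (A : Fin d → Finset (Fin n)) :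
    capN A 0 = A ⟨0, hd⟩ := by
  rw [capN, filter_le_zero hd, Finset.inf_singleton]

lemma cap_succ {n d : ℕ} (mm : ℕ) (h1 : 1 ≤ mm) (h2 : mm < d) (A : Fin d → Finset (Fin n)) :
    capN A mm = A ⟨mm, h2⟩ ⊓ capN A (mm - 1) := by
  rw [capN, capN, filter_le_succ mm h1 h2, Finset.inf_insert]

lemma cap_last {n d : ℕ} (m : ℕ) (hm : d - 1 ≤ m) (A : Fin d → Finset (Fin n)) :
    capN A m = Finset.univ.inf A := by
  rw [capN, filter_le_last m hm]

lemma prod_succ {n d : ℕ} (a : Fin d → ℕ) (mm : ℕ) (h1 : 1 ≤ mm) (h2 : mm < d) :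
    (∏ i ∈ Finset.univ.filter (fun i : Fin d => (i : ℕ) ≤ mm), ((a i : ℝ)/(n:ℝ)))
      = ((a ⟨mm, h2⟩ : ℝ)/(n:ℝ)) *
        ∏ i ∈ Finset.univ.filter (fun i : Fin d => (i : ℕ) ≤ mm - 1), ((a i : ℝ)/(n:ℝ)) := by
  rw [filter_le_succ mm h1 h2, Finset.prod_insert]
  simp only [Finset.mem_filter, Finset.mem_univ, true_and]
  omega

lemma chain_bound (n d : ℕ) (hn : 1 ≤ n) (hd : 2 ≤ d) (a : Fin d → ℕ) (ha : ∀ i, a i ≤ n)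
    (k : ℝ) (hk : 0 < k) (A : Fin d → Finset (Fin n)) (hok : ∀ i, (A i).card = a i)
    (m : ℕ) (hm : m ≤ d - 1)
    (hgood : ∀ l, 1 ≤ l → l ≤ m →
      |((capN A l).card : ℝ) - ((capN A (l-1)).card : ℝ) * ((aNfun d a l : ℕ) : ℝ) / n| < k) :
    |((capN A m).card : ℝ)
        - (n:ℝ) * ∏ i ∈ Finset.univ.filter (fun i : Fin d => (i : ℕ) ≤ m), ((a i : ℝ)/(n:ℝ))|
      ≤ (m:ℝ) * k
    ∧ (1 ≤ m → |((capN A m).card : ℝ)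
        - (n:ℝ) * ∏ i ∈ Finset.univ.filter (fun i : Fin d => (i : ℕ) ≤ m), ((a i : ℝ)/(n:ℝ))|
      < (m:ℝ) * k) := by
  have hn0 : (0:ℝ) < n := by exact_mod_cast hn
  induction m with
  | zero =>
    constructor
    · rw [cap_zero (by omega), filter_le_zero (by omega), Finset.prod_singleton,
        hok ⟨0, by omega⟩]
      have : (n:ℝ) * ((a ⟨0, by omega⟩ : ℝ)/(n:ℝ)) = (a ⟨0, by omega⟩ : ℝ) := by
        field_simp
      rw [this]
      simp
    · intro h
      omega
  | succ m ih =>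
    have hm' : m ≤ d - 1 := by omega
    have hgood' : ∀ l, 1 ≤ l → l ≤ m →
        |((capN A l).card : ℝ) - ((capN A (l-1)).card : ℝ) * ((aNfun d a l : ℕ) : ℝ) / n| < k :=
      fun l hl hlm => hgood l hl (by omega)
    have IH := (ih hm' hgood').1
    have hstep := hgood (m+1) (by omega) le_rfl
    have hmd : m + 1 < d := by omega
    set j : Fin d := ⟨m+1, hmd⟩ with hj
    have haj : (aNfun d a (m+1) : ℕ) = a j := aNfun_eq d a (m+1) hmd
    rw [haj] at hstep
    have hcs : capN A (m+1) = A j ⊓ capN A m := by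
      have := cap_succ (m+1) (by omega) hmd A
      simpa using this
    have hps : (∏ i ∈ Finset.univ.filter (fun i : Fin d => (i : ℕ) ≤ m+1), ((a i : ℝ)/(n:ℝ)))
        = ((a j : ℝ)/(n:ℝ)) *
          ∏ i ∈ Finset.univ.filter (fun i : Fin d => (i : ℕ) ≤ m), ((a i : ℝ)/(n:ℝ)) := by
      have := prod_succ (n := n) a (m+1) (by omega) hmd
      simpa using this
    set X : ℝ := ((capN A (m+1)).card : ℝ) with hX
    set Y : ℝ := ((capN A m).card : ℝ) with hY
    set P : ℝ := ∏ i ∈ Finset.univ.filter (fun i : Fin d => (i : ℕ) ≤ m), ((a i : ℝ)/(n:ℝ))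
      with hP
    have hstep' : |X - Y * (a j : ℝ) / n| < k := by
      have : capN A (m+1-1) = capN A m := by norm_num
      rw [this] at hstep
      exact hstep
    have hp0 : (0:ℝ) ≤ (a j : ℝ)/n := by positivity
    have hp1 : (a j : ℝ)/n ≤ 1 := by
      rw [div_le_one hn0]
      exact_mod_cast ha j
    have key : |X - (n:ℝ) * (((a j : ℝ)/(n:ℝ)) * P)| < ((m:ℝ) + 1) * k := by
      have hiden : X - (n:ℝ) * (((a j : ℝ)/(n:ℝ)) * P)
          = (X - Y * (a j : ℝ) / n) + ((a j : ℝ)/n) * (Y - (n:ℝ) * P) := by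
        ring
      rw [hiden]
      calc |(X - Y * (a j : ℝ) / n) + ((a j : ℝ)/n) * (Y - (n:ℝ) * P)|
          ≤ |X - Y * (a j : ℝ) / n| + |((a j : ℝ)/n) * (Y - (n:ℝ) * P)| := abs_add_le _ _
        _ = |X - Y * (a j : ℝ) / n| + ((a j : ℝ)/n) * |Y - (n:ℝ) * P| := by
            rw [abs_mul, abs_of_nonneg hp0]
        _ < k + 1 * ((m:ℝ) * k) := by
            apply add_lt_add_of_lt_of_le hstep'
            apply mul_le_mul hp1 IH (abs_nonneg _) zero_le_one
        _ = ((m:ℝ) + 1) * k := by ring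
    constructor
    · rw [hps]
      push_cast
      exact le_of_lt key
    · intro _
      rw [hps]
      push_cast
      exact key

open Classical in
lemma event_count (n d : ℕ) (hn : 1 ≤ n) (hd : 2 ≤ d) (a : Fin d → ℕ) (ha : ∀ i, a i ≤ n)
    (k : ℝ) (hk : 0 < k) (mm : ℕ) (h1 : 1 ≤ mm) (h2 : mm ≤ d - 1) :
    ((Finset.univ.filter (fun A : Fin d → Finset (Fin n) =>
        (∀ i, (A i).card = a i) ∧
        k ≤ |((capN A mm).card : ℝ)
          - ((capN A (mm-1)).card : ℝ) * ((aNfun d a mm : ℕ) : ℝ) / n|)).card : ℝ)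
      ≤ 2 * Real.exp (-2 * k^2 / n) * ∏ i, (n.choose (a i) : ℝ) := by
  have hmmd : mm < d := by omega
  set j : Fin d := ⟨mm, hmmd⟩ with hjdef
  set e := Equiv.funSplitAt j (Finset (Fin n)) with hedef
  set P : (Fin d → Finset (Fin n)) → Prop := fun A =>
      (∀ i, (A i).card = a i) ∧
      k ≤ |((capN A mm).card : ℝ)
        - ((capN A (mm-1)).card : ℝ) * ((aNfun d a mm : ℕ) : ℝ) / n| with hPdef
  have hs1 : ∀ (c : Finset (Fin n)) (x : {i : Fin d // i ≠ j} → Finset (Fin n))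
      (i : Fin d) (h : i ≠ j), e.symm (c, x) i = x ⟨i, h⟩ := by
    intro c x i h
    simp [hedef, Equiv.funSplitAt, Equiv.piSplitAt, dif_neg h]
  have hs2 : ∀ (c : Finset (Fin n)) (x : {i : Fin d // i ≠ j} → Finset (Fin n)),
      e.symm (c, x) j = c := by
    intro c x
    simp [hedef, Equiv.funSplitAt, Equiv.piSplitAt]
  have hs3 : ∀ (c c' : Finset (Fin n)) (x : {i : Fin d // i ≠ j} → Finset (Fin n)),
      capN (e.symm (c, x)) (mm-1) = capN (e.symm (c', x)) (mm-1) := by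
    intro c c' x
    unfold capN
    apply Finset.inf_congr rfl
    intro i hi
    have hi' : (i:ℕ) ≤ mm - 1 := (Finset.mem_filter.1 hi).2
    have hne : i ≠ j := by
      intro hij
      have : (i:ℕ) = mm := by rw [hij]
      omega
    rw [hs1 c x i hne, hs1 c' x i hne]
  have hs4 : ∀ (c : Finset (Fin n)) (x : {i : Fin d // i ≠ j} → Finset (Fin n)),
      capN (e.symm (c, x)) mm = c ⊓ capN (e.symm (c, x)) (mm-1) := by
    intro c x
    rw [cap_succ mm h1 hmmd, hs2]
  set C : ℝ := 2 * (n.choose (a j) : ℝ) * Real.exp (-2 * k^2 / n) with hCdef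
  set R : ({i : Fin d // i ≠ j} → Finset (Fin n)) → Prop :=
    fun x => ∀ i, (x i).card = a i.1 with hRdef
  have key : ((Finset.univ.filter P).card : ℝ) ≤ C * ((Finset.univ.filter R).card : ℝ) := by
    rw [card_filter_equiv e P]
    apply card_filter_prod (fun cx => P (e.symm cx)) R C (by positivity)
    · intro x hRx
      rw [Finset.filter_eq_empty_iff]
      intro c _
      intro hQ
      apply hRx
      intro i
      have h := hQ.1 i.1
      rwa [hs1 c x i.1 i.2] at h
    · intro x hRx
      set B := capN (e.symm (∅, x)) (mm-1) with hBdef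
      have hsubfib : Finset.univ.filter (fun c : Finset (Fin n) => P (e.symm (c, x)))
          ⊆ (Finset.univ.powersetCard (a j)).filter
              (fun c : Finset (Fin n) =>
                k ≤ |((c ∩ B).card : ℝ) - (a j : ℝ) * B.card / n|) := by
        intro c hc
        have hm := Finset.mem_filter.1 hc
        have hok := hm.2.1
        have hev := hm.2.2
        have hcardc : c.card = a j := by
          have h := hok j
          rwa [hs2 c x] at h
        rw [Finset.mem_filter]
        refine ⟨Finset.mem_powersetCard.2 ⟨Finset.subset_univ c, hcardc⟩, ?_⟩
        rw [hs4 c x, hs3 c ∅ x, aNfun_eq d a mm hmmd, Finset.inf_eq_inter] at hev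
        have hcomm : ((B.card : ℝ)) * ((a (⟨mm, hmmd⟩ : Fin d)) : ℝ) / n
            = ((a j : ℝ)) * (B.card : ℝ) / n := by
          rw [hjdef]
          ring
        rwa [hcomm] at hev
      calc ((Finset.univ.filter (fun c : Finset (Fin n) => P (e.symm (c, x)))).card : ℝ)
          ≤ (((Finset.univ.powersetCard (a j)).filter
              (fun c : Finset (Fin n) =>
                k ≤ |((c ∩ B).card : ℝ) - (a j : ℝ) * B.card / n|)).card : ℝ) := by
            exact_mod_cast Finset.card_le_card hsubfib
        _ ≤ 2 * (n.choose (a j) : ℝ) * Real.exp (-2 * k^2 / n) :=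
            chernoff_two n (a j) hn (ha j) B k hk
  have hRcount : ((Finset.univ.filter R).card : ℕ)
      = ∏ i : {i : Fin d // i ≠ j}, n.choose (a i.1) :=
    @card_filter_tuples {i : Fin d // i ≠ j} _ _ n (fun i => a i.1)
      (fun _ => Fintype.decidableForallFintype)
  have hps : ∏ i ∈ Finset.univ.erase j, (n.choose (a i) : ℝ)
      = ∏ i : {i : Fin d // i ≠ j}, (n.choose (a i.1) : ℝ) :=
    Finset.prod_subtype (Finset.univ.erase j) (fun x => by simp) _
  calc ((Finset.univ.filter P).card : ℝ)
      ≤ C * ((Finset.univ.filter R).card : ℝ) := key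
    _ = 2 * Real.exp (-2 * k^2 / n)
        * ((n.choose (a j) : ℝ) * ∏ i : {i : Fin d // i ≠ j}, (n.choose (a i.1) : ℝ)) := by
        rw [hCdef, hRcount]
        push_cast
        ring
    _ = 2 * Real.exp (-2 * k^2 / n) * ∏ i, (n.choose (a i) : ℝ) := by
        rw [← Finset.mul_prod_erase Finset.univ (fun i => ((n.choose (a i) : ℕ) : ℝ))
          (Finset.mem_univ j), hps]

/-- Let `A_1, …, A_d` (`d ≥ 2`) be independent uniformly random subsets of `{1,…,n}` with
`|A_i| = a_i`.  Then for every `k > 0`,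
`P(| |A_1 ∩ ⋯ ∩ A_d| − n ∏ (a_i/n) | ≥ (d−1)k) ≤ 2(d−1) exp(−2k²/n)`. -/
theorem stmt11 (n d : ℕ) (hd : 2 ≤ d) (a : Fin d → ℕ) (ha : ∀ i, a i ≤ n)
    (k : ℝ) (hk : 0 < k) :
    (Nat.card {A : Fin d → Finset (Fin n) //
        (∀ i, (A i).card = a i) ∧
        ((d : ℝ) - 1) * k ≤
          |((Finset.univ.inf A).card : ℝ) - n * ∏ i, ((a i : ℝ) / n)|} : ℝ) /
      (∏ i, (n.choose (a i) : ℝ)) ≤ 2 * ((d : ℝ) - 1) * Real.exp (-2 * k ^ 2 / n) := by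
  classical
  have hd1 : 1 ≤ d - 1 := by omega
  have hprodpos : (0:ℝ) < ∏ i, (n.choose (a i) : ℝ) :=
    Finset.prod_pos (fun i _ => by exact_mod_cast Nat.choose_pos (ha i))
  rw [div_le_iff₀ hprodpos]
  have hcast : ((d-1 : ℕ):ℝ) = (d:ℝ) - 1 := by
    have h1d : (1:ℕ) ≤ d := by omega
    push_cast [Nat.cast_sub h1d]
    ring
  rcases Nat.eq_zero_or_pos n with hn0 | hn
  · have hempty : IsEmpty {A : Fin d → Finset (Fin n) //
        (∀ i, (A i).card = a i) ∧
        ((d : ℝ) - 1) * k ≤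
          |((Finset.univ.inf A).card : ℝ) - n * ∏ i, ((a i : ℝ) / n)|} := by
      refine ⟨fun x => ?_⟩
      obtain ⟨A, hok, hbad⟩ := x
      have hinf : ((Finset.univ.inf A).card : ℝ) = 0 := by
        have h := Finset.card_le_univ (Finset.univ.inf A)
        simp only [Finset.card_univ, Fintype.card_fin] at h
        have : (Finset.univ.inf A).card = 0 := by omega
        exact_mod_cast this
      have hp : (n:ℝ) * ∏ i, ((a i:ℝ)/(n:ℝ)) = 0 := by
        rw [hn0]; simp
      rw [hinf, hp] at hbad
      simp only [sub_zero, abs_zero] at hbad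
      have hdk : (0:ℝ) < ((d:ℝ)-1)*k := by
        have : (2:ℝ) ≤ (d:ℝ) := by exact_mod_cast hd
        nlinarith
      linarith
    haveI := hempty
    rw [Nat.card_of_isEmpty]
    have h2d : (2:ℝ) ≤ (d:ℝ) := by exact_mod_cast hd
    have hd0 : (0:ℝ) ≤ (d:ℝ) - 1 := by linarith
    push_cast
    exact mul_nonneg (mul_nonneg (mul_nonneg (by norm_num) hd0) (Real.exp_pos _).le)
      hprodpos.le
  · set Pbad : (Fin d → Finset (Fin n)) → Prop := fun A =>
      (∀ i, (A i).card = a i) ∧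
      ((d : ℝ) - 1) * k ≤
        |((Finset.univ.inf A).card : ℝ) - n * ∏ i, ((a i : ℝ) / n)| with hPbad
    have hNat : ((Nat.card {A : Fin d → Finset (Fin n) // Pbad A}) : ℝ)
        = ((Finset.univ.filter Pbad).card : ℝ) := by
      rw [Nat.card_eq_fintype_card, Fintype.card_subtype]
    rw [hNat]
    set E : ℕ → Finset (Fin d → Finset (Fin n)) := fun mm => Finset.univ.filter (fun A =>
      (∀ i, (A i).card = a i) ∧
      k ≤ |((capN A mm).card : ℝ)
        - ((capN A (mm-1)).card : ℝ) * ((aNfun d a mm : ℕ) : ℝ) / n|) with hE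
    have hsub : Finset.univ.filter Pbad ⊆ (Finset.Icc 1 (d-1)).biUnion E := by
      intro A hA
      have hPA := (Finset.mem_filter.1 hA).2
      by_contra hnot
      rw [Finset.mem_biUnion] at hnot
      push_neg at hnot
      have hgood : ∀ l, 1 ≤ l → l ≤ d - 1 →
          |((capN A l).card : ℝ)
            - ((capN A (l-1)).card : ℝ) * ((aNfun d a l : ℕ) : ℝ) / n| < k := by
        intro l hl1 hl2
        have h := hnot l (Finset.mem_Icc.2 ⟨hl1, hl2⟩)
        rw [hE, Finset.mem_filter] at h
        push_neg at h
        exact h (Finset.mem_univ A) hPA.1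
      have hchain := (chain_bound n d hn hd a ha k hk A hPA.1 (d-1) le_rfl hgood).2 hd1
      rw [cap_last (d-1) le_rfl, filter_le_last (d-1) le_rfl, hcast] at hchain
      have hbad := hPA.2
      linarith
    calc ((Finset.univ.filter Pbad).card : ℝ)
        ≤ (((Finset.Icc 1 (d-1)).biUnion E).card : ℝ) := by
          exact_mod_cast Finset.card_le_card hsub
      _ ≤ ∑ mm ∈ Finset.Icc 1 (d-1), ((E mm).card : ℝ) := by
          exact_mod_cast Finset.card_biUnion_le
      _ ≤ ∑ _mm ∈ Finset.Icc 1 (d-1),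
            2 * Real.exp (-2*k^2/n) * ∏ i, (n.choose (a i) : ℝ) := by
          apply Finset.sum_le_sum
          intro mm hmm
          obtain ⟨hm1, hm2⟩ := Finset.mem_Icc.1 hmm
          exact event_count n d hn hd a ha k hk mm hm1 hm2
      _ = ((d-1 : ℕ):ℝ) * (2 * Real.exp (-2*k^2/n) * ∏ i, (n.choose (a i) : ℝ)) := by
          have hicc : d - 1 + 1 - 1 = d - 1 := by omega
          rw [Finset.sum_const, Nat.card_Icc, hicc, nsmul_eq_mul]
      _ = 2 * ((d:ℝ)-1) * Real.exp (-2*k^2/n) * ∏ i, (n.choose (a i) : ℝ) := by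
          rw [hcast]
          ring
end

section
/- Let V = ⊕_{i=1}^ℓ ⟨v_i⟩ be a finite abelian group with o_1 | o_2 | ... | o_ℓ where o_i is the order of v_i. Let q ∈ V^n satisfy that each v_i occurs among the entries of q, and let r ∈ V^n satisfy ⟨q ⊗ r⟩ := Σ_{k=1}^n q_k ⊗ r_k ∈ I_2(V). Then there is a symmetric integer n×n matrix A with all diagonal entries even such that r = Aq. -/
open TensorProduct

noncomputable def cyc {V : Type*} [AddCommGroup V] (x : V) :
    (Submodule.span ℤ {x} : Submodule ℤ V) →ₗ[ℤ] ZMod (addOrderOf x) :=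
  ((Int.quotientSpanNatEquivZMod (addOrderOf x)).toAddEquiv.toAddMonoidHom.toIntLinearMap.comp
    ((Submodule.quotEquivOfEq (LinearMap.ker (LinearMap.toSpanSingleton ℤ V x))
        (Ideal.span {(addOrderOf x : ℤ)})
        (by ext k;
            simp [LinearMap.mem_ker, Ideal.mem_span_singleton,
              LinearMap.toSpanSingleton_apply, ← addOrderOf_dvd_iff_zsmul_eq_zero])).toLinearMap.comp
      (((LinearMap.toSpanSingleton ℤ V x).quotKerEquivRange).symm.toLinearMap.comp
        (LinearEquiv.ofEq _ _ (LinearMap.span_singleton_eq_range ℤ V x)).toLinearMap)))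

lemma cyc_self {V : Type*} [AddCommGroup V] (x : V) :
    cyc x ⟨x, Submodule.mem_span_singleton_self x⟩ = 1 := by
  unfold cyc
  simp only [LinearMap.comp_apply, LinearEquiv.coe_coe]
  have h2 : ((LinearMap.toSpanSingleton ℤ V x).quotKerEquivRange).symm
      ((LinearEquiv.ofEq _ _ (LinearMap.span_singleton_eq_range ℤ V x))
        (⟨x, Submodule.mem_span_singleton_self x⟩ :
          (Submodule.span ℤ {x} : Submodule ℤ V)))
      = Submodule.Quotient.mk 1 := by
    rw [LinearEquiv.symm_apply_eq]
    ext
    rw [LinearMap.quotKerEquivRange_apply_mk]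
    simp [LinearMap.toSpanSingleton_apply]
  rw [h2]
  have h3 : ∀ (hh : LinearMap.ker (LinearMap.toSpanSingleton ℤ V x) = Ideal.span {(addOrderOf x : ℤ)}), (Submodule.quotEquivOfEq _ _ hh) ((Submodule.Quotient.mk 1 : ℤ ⧸ LinearMap.ker (LinearMap.toSpanSingleton ℤ V x))) = Submodule.Quotient.mk 1 := fun _ => rfl
  rw [h3]
  have h4 : (Submodule.Quotient.mk 1 : ℤ ⧸ (Ideal.span {(addOrderOf x : ℤ)} : Ideal ℤ)) = (1 : ℤ ⧸ (Ideal.span {(addOrderOf x : ℤ)})) := rfl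
  rw [h4]
  simp

lemma coord_exists (V : Type*) [AddCommGroup V] {ℓ : ℕ} (v : Fin ℓ → V)
    (hdecomp : DirectSum.IsInternal
      (fun i : Fin ℓ => (Submodule.span ℤ {v i} : Submodule ℤ V))) :
    ∃ f : ∀ i : Fin ℓ, V →ₗ[ℤ] ZMod (addOrderOf (v i)),
      ∀ i j : Fin ℓ, f i (v j) = if j = i then 1 else 0 := by
  set A := fun i : Fin ℓ => (Submodule.span ℤ {v i} : Submodule ℤ V) with hA
  set e := LinearEquiv.ofBijective (DirectSum.coeLinearMap A) hdecomp with he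
  refine ⟨fun i => (cyc (v i)).comp
    ((DirectSum.component ℤ (Fin ℓ) (fun i => A i) i).comp e.symm.toLinearMap), ?_⟩
  intro i j
  simp only [LinearMap.comp_apply, LinearEquiv.coe_coe]
  have hcomp : ∀ (x : DirectSum (Fin ℓ) (fun i => A i)), (DirectSum.component ℤ (Fin ℓ) (fun i => A i) i) x = x i :=
    fun _ => rfl
  rw [hcomp]
  by_cases hij : j = i
  · subst hij
    rw [hdecomp.ofBijective_coeLinearMap_of_mem (Submodule.mem_span_singleton_self (v j))]
    simp [cyc_self]
  · rw [hdecomp.ofBijective_coeLinearMap_of_mem_ne hij (Submodule.mem_span_singleton_self (v j))]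
    simp [hij]

lemma coords_exist (V : Type*) [AddCommGroup V] {ℓ : ℕ} (v : Fin ℓ → V)
    (hdecomp : DirectSum.IsInternal
      (fun i : Fin ℓ => (Submodule.span ℤ {v i} : Submodule ℤ V)))
    (x : V) : ∃ c : Fin ℓ → ℤ, ∑ i, c i • v i = x := by
  rw [← Submodule.mem_span_range_iff_exists_fun]
  have h1 : Submodule.span ℤ (Set.range v) = ⊤ := by
    rw [Submodule.span_range_eq_iSup]
    exact hdecomp.submodule_iSup_eq_top
  rw [h1]; trivial

lemma sym_decomp (V : Type*) [AddCommGroup V] {ℓ : ℕ} (v : Fin ℓ → V)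
    (hdecomp : DirectSum.IsInternal
      (fun i : Fin ℓ => (Submodule.span ℤ {v i} : Submodule ℤ V)))
    {x : TensorProduct ℤ V V}
    (hx : x ∈ Submodule.span ℤ
        {x : TensorProduct ℤ V V | ∃ a b : V, x = a ⊗ₜ[ℤ] b + b ⊗ₜ[ℤ] a}) :
    ∃ S : Matrix (Fin ℓ) (Fin ℓ) ℤ, S.IsSymm ∧ (∀ i, Even (S i i)) ∧
      x = ∑ i, ∑ j, S i j • (v i ⊗ₜ[ℤ] v j) := by
  let T : Submodule ℤ (TensorProduct ℤ V V) :=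
    { carrier := {x | ∃ S : Matrix (Fin ℓ) (Fin ℓ) ℤ, S.IsSymm ∧ (∀ i, Even (S i i)) ∧
        x = ∑ i, ∑ j, S i j • (v i ⊗ₜ[ℤ] v j)}
      zero_mem' := ⟨0, Matrix.isSymm_zero, fun i => by simp, by simp⟩
      add_mem' := by
        rintro a b ⟨S, hS, hSe, rfl⟩ ⟨S', hS', hS'e, rfl⟩
        refine ⟨S + S', hS.add hS', fun i => (hSe i).add (hS'e i), ?_⟩
        rw [← Finset.sum_add_distrib]
        refine Finset.sum_congr rfl fun i _ => ?_
        rw [← Finset.sum_add_distrib]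
        refine Finset.sum_congr rfl fun j _ => ?_
        simp [Matrix.add_apply, add_smul]
      smul_mem' := by
        rintro c a ⟨S, hS, hSe, rfl⟩
        refine ⟨c • S, by unfold Matrix.IsSymm; rw [Matrix.transpose_smul, hS],
          fun i => by simpa using (hSe i).mul_left c, ?_⟩
        rw [Finset.smul_sum]
        refine Finset.sum_congr rfl fun i _ => ?_
        rw [Finset.smul_sum]
        refine Finset.sum_congr rfl fun j _ => ?_
        simp [mul_smul]
      }
  suffices h : x ∈ T by exact h
  refine Submodule.span_le.mpr ?_ hx
  rintro y ⟨a, b, rfl⟩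
  obtain ⟨α, hα⟩ := coords_exist V v hdecomp a
  obtain ⟨β, hβ⟩ := coords_exist V v hdecomp b
  refine ⟨fun i j => α i * β j + α j * β i,
    by unfold Matrix.IsSymm; ext i j; change α j * β i + α i * β j = α i * β j + α j * β i; ring,
    fun i => ⟨α i * β i, by ring⟩, ?_⟩
  have expand : ∀ γ δ : Fin ℓ → ℤ,
      (∑ i, γ i • v i) ⊗ₜ[ℤ] (∑ j, δ j • v j) =
        ∑ i, ∑ j, (γ i * δ j) • (v i ⊗ₜ[ℤ] v j) := by
    intro γ δ
    rw [TensorProduct.sum_tmul]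
    refine Finset.sum_congr rfl fun i _ => ?_
    rw [TensorProduct.tmul_sum]
    refine Finset.sum_congr rfl fun j _ => ?_
    rw [TensorProduct.smul_tmul_smul]
  rw [← hα, ← hβ, expand α β, expand β α]
  rw [← Finset.sum_add_distrib]
  refine Finset.sum_congr rfl fun i _ => ?_
  rw [← Finset.sum_add_distrib]
  refine Finset.sum_congr rfl fun j _ => ?_
  rw [add_smul]
  congr 1
  rw [mul_comm]

lemma tensor_indep (V : Type*) [AddCommGroup V] [Finite V] {ℓ : ℕ} (v : Fin ℓ → V)
    (hdecomp : DirectSum.IsInternal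
      (fun i : Fin ℓ => (Submodule.span ℤ {v i} : Submodule ℤ V)))
    (d : Matrix (Fin ℓ) (Fin ℓ) ℤ)
    (hd : ∑ i, ∑ j, d i j • (v i ⊗ₜ[ℤ] v j) = 0) (a b : Fin ℓ) :
    ((Nat.gcd (addOrderOf (v a)) (addOrderOf (v b)) : ℕ) : ℤ) ∣ d a b := by
  obtain ⟨f, hf⟩ := coord_exists V v hdecomp
  set g := Nat.gcd (addOrderOf (v a)) (addOrderOf (v b)) with hg
  haveI : NeZero g := ⟨Nat.pos_iff_ne_zero.mp (Nat.gcd_pos_of_pos_left _ (addOrderOf_pos _))⟩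
  let ca : ZMod (addOrderOf (v a)) →+* ZMod g := ZMod.castHom (Nat.gcd_dvd_left (addOrderOf (v a)) (addOrderOf (v b))) (ZMod g)
  let cb : ZMod (addOrderOf (v b)) →+* ZMod g := ZMod.castHom (Nat.gcd_dvd_right (addOrderOf (v a)) (addOrderOf (v b))) (ZMod g)
  let B : V →ₗ[ℤ] V →ₗ[ℤ] ZMod g := LinearMap.mk₂ ℤ
    (fun x y => (ca (f a x)) * (cb (f b y)))
    (fun _ _ _ => by simp only [map_add, map_smul, map_zsmul, add_mul, mul_add, smul_mul_assoc, mul_smul_comm])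
    (fun _ _ _ => by simp only [map_add, map_smul, map_zsmul, add_mul, mul_add, smul_mul_assoc, mul_smul_comm])
    (fun _ _ _ => by simp only [map_add, map_smul, map_zsmul, add_mul, mul_add, smul_mul_assoc, mul_smul_comm])
    (fun _ _ _ => by simp only [map_add, map_smul, map_zsmul, add_mul, mul_add, smul_mul_assoc, mul_smul_comm])
  let Φ := TensorProduct.lift B
  have h0 : Φ (∑ i, ∑ j, d i j • (v i ⊗ₜ[ℤ] v j)) = 0 := by rw [hd, map_zero]
  rw [map_sum] at h0
  have h1 : ∀ i : Fin ℓ, Φ (∑ j, d i j • (v i ⊗ₜ[ℤ] v j)) =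
      ∑ j, d i j • ((ca (f a (v i))) * (cb (f b (v j)))) := by
    intro i
    rw [map_sum]
    refine Finset.sum_congr rfl fun j _ => ?_
    rw [map_smul]
    rfl
  simp only [h1, hf] at h0
  have h2 : ((d a b : ℤ) : ZMod g) = 0 := by
    rw [Fintype.sum_eq_single a ?_] at h0
    · rw [Fintype.sum_eq_single b ?_] at h0
      · simpa [zsmul_eq_mul] using h0
      · intro j hj; simp [hj]
    · intro i hi
      apply Finset.sum_eq_zero
      intro j _
      simp [hi]
  exact (ZMod.intCast_zmod_eq_zero_iff_dvd _ _).mp h2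

lemma even_double_sum {ℓ : ℕ} (F : Fin ℓ → Fin ℓ → ℤ)
    (hsym : ∀ i j, F i j = F j i) (hdiag : ∀ i, Even (F i i)) :
    Even (∑ i, ∑ j, F i j) := by
  rw [← Finset.sum_product' (s := Finset.univ) (t := Finset.univ)]
  rw [← Finset.diag_union_offDiag (Finset.univ : Finset (Fin ℓ))]
  rw [Finset.sum_union (Finset.disjoint_diag_offDiag _)]
  apply Even.add
  · rw [Finset.sum_diag]
    rw [Int.even_iff]
    rw [Finset.sum_int_mod]
    simp only [Int.even_iff] at hdiag
    simp [hdiag]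
  · rw [← Finset.sum_filter_add_sum_filter_not (Finset.univ.offDiag) (fun p => p.1 < p.2)]
    have h2 : ∑ p ∈ Finset.univ.offDiag.filter (fun p => ¬ p.1 < p.2), F p.1 p.2 =
        ∑ p ∈ Finset.univ.offDiag.filter (fun p => p.1 < p.2), F p.1 p.2 := by
      refine Finset.sum_nbij' Prod.swap Prod.swap ?_ ?_ ?_ ?_ ?_
      · intro p hp
        simp only [Finset.mem_filter, Finset.mem_offDiag] at hp ⊢
        obtain ⟨⟨_, _, hne⟩, hnlt⟩ := hp
        exact ⟨⟨by simp, by simp, Ne.symm hne⟩, lt_of_le_of_ne (not_lt.mp hnlt) (Ne.symm hne)⟩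
      · intro p hp
        simp only [Finset.mem_filter, Finset.mem_offDiag] at hp ⊢
        obtain ⟨⟨_, _, hne⟩, hlt⟩ := hp
        exact ⟨⟨by simp, by simp, Ne.symm hne⟩, not_lt.mpr (le_of_lt hlt)⟩
      · intro p _; simp
      · intro p _; simp
      · intro p _; exact hsym p.1 p.2
    rw [h2]
    exact ⟨_, rfl⟩

lemma expand_tmul {V : Type*} [AddCommGroup V] {ℓ : ℕ} (v : Fin ℓ → V) (γ δ : Fin ℓ → ℤ) :
    (∑ i, γ i • v i) ⊗ₜ[ℤ] (∑ j, δ j • v j) =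
      ∑ i, ∑ j, (γ i * δ j) • (v i ⊗ₜ[ℤ] v j) := by
  rw [TensorProduct.sum_tmul]
  refine Finset.sum_congr rfl fun i _ => ?_
  rw [TensorProduct.tmul_sum]
  refine Finset.sum_congr rfl fun j _ => ?_
  rw [TensorProduct.smul_tmul_smul]

/-- Let `V = ⊕_{i=1}^ℓ ⟨v_i⟩` be a finite abelian group with `o_1 ∣ o_2 ∣ ⋯ ∣ o_ℓ`
(`o_i` the order of `v_i`).  Let `q ∈ V^n` contain each `v_i` among its entries and let
`r ∈ V^n` satisfy `Σ_k q_k ⊗ r_k ∈ I_2(V)` (the subgroup of `V ⊗ V` generated by all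
`a⊗b + b⊗a`).  Then there is a symmetric integer matrix `A` with even diagonal entries
such that `r = Aq`. -/
theorem stmt13 (V : Type*) [AddCommGroup V] [Fintype V] (ℓ n : ℕ)
    (v : Fin ℓ → V)
    (hdecomp : DirectSum.IsInternal
      (fun i : Fin ℓ => (Submodule.span ℤ {v i} : Submodule ℤ V)))
    (hdvd : ∀ i j : Fin ℓ, i ≤ j → addOrderOf (v i) ∣ addOrderOf (v j))
    (q r : Fin n → V)
    (hq : ∀ i, ∃ k, q k = v i)
    (hr : (∑ k, q k ⊗ₜ[ℤ] r k) ∈ Submodule.span ℤ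
        {x : TensorProduct ℤ V V | ∃ a b : V, x = a ⊗ₜ[ℤ] b + b ⊗ₜ[ℤ] a}) :
    ∃ A : Matrix (Fin n) (Fin n) ℤ, A.IsSymm ∧ (∀ i, Even (A i i)) ∧
      ∀ i, r i = ∑ j, A i j • q j := by
  classical
  set o : Fin ℓ → ℕ := fun i => addOrderOf (v i) with ho
  choose σ hσ using hq
  choose ρ hρ using fun k => coords_exist V v hdecomp (r k)
  choose m hm using fun k => coords_exist V v hdecomp (q k)
  set c : Matrix (Fin ℓ) (Fin ℓ) ℤ := Matrix.of fun a b => ∑ k, m k a * ρ k b with hc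
  -- tensor expansion
  have hexp : (∑ k, q k ⊗ₜ[ℤ] r k) = ∑ a, ∑ b, c a b • (v a ⊗ₜ[ℤ] v b) := by
    have h1 : ∀ k, q k ⊗ₜ[ℤ] r k = ∑ a, ∑ b, (m k a * ρ k b) • (v a ⊗ₜ[ℤ] v b) := by
      intro k; rw [← hm k, ← hρ k, expand_tmul]
    rw [Finset.sum_congr rfl fun k _ => h1 k]
    rw [Finset.sum_comm]
    refine Finset.sum_congr rfl fun a _ => ?_
    rw [Finset.sum_comm]
    refine Finset.sum_congr rfl fun b _ => ?_
    rw [← Finset.sum_smul]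
    rfl
  obtain ⟨S, hSsym, hSeven, hS⟩ := sym_decomp V v hdecomp hr
  have hd : ∑ a, ∑ b, (c a b - S a b) • (v a ⊗ₜ[ℤ] v b) = 0 := by
    have : ∀ a b : Fin ℓ, (c a b - S a b) • (v a ⊗ₜ[ℤ] v b)
        = c a b • (v a ⊗ₜ[ℤ] v b) - S a b • (v a ⊗ₜ[ℤ] v b) := fun a b => sub_smul _ _ _
    simp only [this, Finset.sum_sub_distrib]
    rw [← hexp, ← hS, sub_self]
  have hdiv : ∀ a b, ((Nat.gcd (o a) (o b) : ℕ) : ℤ) ∣ c a b - S a b :=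
    tensor_indep V v hdecomp (c - S) (by simpa using hd)
  -- congruence (i): for j ≤ i, o j ∣ c i j - c j i
  have hcc : ∀ i j : Fin ℓ, j ≤ i → ((o j : ℕ) : ℤ) ∣ c i j - c j i := by
    intro i j hji
    have hgcd : Nat.gcd (o i) (o j) = o j := by
      rw [Nat.gcd_comm]; exact Nat.gcd_eq_left (hdvd j i hji)
    have h1 := hdiv i j
    have h2 := hdiv j i
    rw [hgcd] at h1
    rw [Nat.gcd_comm, hgcd] at h2
    have : c i j - c j i = (c i j - S i j) - (c j i - S j i) := by
      have := congrFun (congrFun hSsym j) i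
      simp only [Matrix.transpose_apply] at this
      rw [show S i j = S j i from by rw [← Matrix.IsSymm.apply hSsym i j]]
      ring
    rw [this]
    exact dvd_sub h1 h2
  -- congruence (ii): o i ∣ c i i - S i i
  have hdg : ∀ i : Fin ℓ, ((o i : ℕ) : ℤ) ∣ c i i - S i i := by
    intro i
    have := hdiv i i
    rwa [Nat.gcd_self] at this
  -- the adjusted symmetric matrix
  set S' : Matrix (Fin ℓ) (Fin ℓ) ℤ := Matrix.of fun i j =>
    if i < j then c j i else if j < i then c i j
    else (if Even (c i i) then c i i else c i i + (o i : ℤ)) with hS'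
  have hS'sym : ∀ i j, S' i j = S' j i := by
    intro i j
    rcases lt_trichotomy i j with h | h | h
    · simp [hS', Matrix.of_apply, h, not_lt.mpr (le_of_lt h), lt_asymm h]
    · subst h; rfl
    · simp [hS', Matrix.of_apply, h, not_lt.mpr (le_of_lt h), lt_asymm h]
  have hS'even : ∀ i, Even (S' i i) := by
    intro i
    simp only [hS', Matrix.of_apply, lt_irrefl, if_false, if_neg (lt_irrefl i)]
    by_cases hE : Even (c i i)
    · simpa [hE] using hE
    · simp only [hE, if_false]
      have hoo : ¬ Even ((o i : ℕ) : ℤ) := by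
        intro hEo
        apply hE
        have h1 : Even (c i i - S i i) :=
          even_iff_two_dvd.mpr ((even_iff_two_dvd.mp hEo).trans (hdg i))
        have h2 := h1.add (hSeven i)
        simpa using h2
      rw [Int.even_add]
      simp [hE, hoo]
  -- key: (o j) ∣ S' i j - c j i, hence the smul identity
  have hkey : ∀ i j : Fin ℓ, (S' i j) • v j = (c j i) • v j := by
    intro i j
    have hdvd0 : ((o j : ℕ) : ℤ) ∣ S' i j - c j i := by
      rcases lt_trichotomy i j with h | h | h
      · simp [hS', Matrix.of_apply, h]
      · subst h
        simp only [hS', Matrix.of_apply, lt_irrefl, if_false, if_neg (lt_irrefl i)]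
        by_cases hE : Even (c i i)
        · simp [hE]
        · simp only [hE, if_false]
          have : c i i + (o i : ℤ) - c i i = (o i : ℤ) := by ring
          rw [this]
      · simp only [hS', Matrix.of_apply, lt_asymm h, if_false, if_pos h]
        exact hcc i j (le_of_lt h)
    have : (S' i j - c j i) • v j = 0 := by
      rw [← addOrderOf_dvd_iff_zsmul_eq_zero]
      exact hdvd0
    rw [sub_smul] at this
    exact sub_eq_zero.mp this
  -- w identity
  have hw : ∀ i : Fin ℓ, ∑ k, ρ k i • q k = ∑ j, c j i • v j := by
    intro i
    have h1 : ∀ k, ρ k i • q k = ∑ j, (m k j * ρ k i) • v j := by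
      intro k
      rw [← hm k, Finset.smul_sum]
      refine Finset.sum_congr rfl fun j _ => ?_
      rw [smul_smul, mul_comm]
    rw [Finset.sum_congr rfl fun k _ => h1 k, Finset.sum_comm]
    refine Finset.sum_congr rfl fun j _ => ?_
    rw [← Finset.sum_smul]
    rfl
  have hkey' : ∀ i : Fin ℓ, ∑ j, S' i j • v j = ∑ k, ρ k i • q k := by
    intro i
    rw [hw i]
    exact Finset.sum_congr rfl fun j _ => hkey i j
  refine ⟨Matrix.of fun k l =>
    (∑ i, if l = σ i then ρ k i else 0) + (∑ i, if k = σ i then ρ l i else 0)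
      - ∑ i, ∑ j, if k = σ i ∧ l = σ j then S' i j else 0, ?_, ?_, ?_⟩
  · -- symmetry
    unfold Matrix.IsSymm
    ext k l
    rw [Matrix.transpose_apply]
    simp only [Matrix.of_apply]
    have hz : (∑ i, ∑ j, if l = σ i ∧ k = σ j then S' i j else 0)
        = ∑ i, ∑ j, if k = σ i ∧ l = σ j then S' i j else 0 := by
      rw [Finset.sum_comm]
      refine Finset.sum_congr rfl fun i _ => Finset.sum_congr rfl fun j _ => ?_
      by_cases h1 : k = σ i <;> by_cases h2 : l = σ j <;> simp [h1, h2, hS'sym j i]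
    rw [hz, add_comm (∑ i, if k = σ i then ρ l i else 0)]
  · -- even diagonal
    intro k
    simp only [Matrix.of_apply]
    refine Even.sub ⟨∑ i, if k = σ i then ρ k i else 0, rfl⟩ ?_
    refine even_double_sum _ ?_ ?_
    · intro i j
      by_cases h1 : k = σ i <;> by_cases h2 : k = σ j <;> simp [h1, h2, hS'sym j i]
    · intro i
      by_cases h1 : k = σ i <;> simp [h1, hS'even i]
  · -- the linear identity
    intro k
    simp only [Matrix.of_apply]
    have split : ∀ l, ((∑ i, if l = σ i then ρ k i else 0) + (∑ i, if k = σ i then ρ l i else 0)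
        - ∑ i, ∑ j, if k = σ i ∧ l = σ j then S' i j else 0) • q l
        = (∑ i, if l = σ i then ρ k i else 0) • q l + (∑ i, if k = σ i then ρ l i else 0) • q l
          - (∑ i, ∑ j, if k = σ i ∧ l = σ j then S' i j else 0) • q l := by
      intro l; rw [sub_smul, add_smul]
    rw [Finset.sum_congr rfl fun l _ => split l, Finset.sum_sub_distrib, Finset.sum_add_distrib]
    have hP1 : ∑ l, (∑ i, if l = σ i then ρ k i else 0) • q l = r k := by
      have h1 : ∀ l, (∑ i, if l = σ i then ρ k i else 0) • q l
          = ∑ i, (if l = σ i then ρ k i • q l else 0) := by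
        intro l
        rw [Finset.sum_smul]
        exact Finset.sum_congr rfl fun i _ => by split <;> simp
      rw [Finset.sum_congr rfl fun l _ => h1 l, Finset.sum_comm]
      have h2 : ∀ i, ∑ l, (if l = σ i then ρ k i • q l else 0) = ρ k i • v i := by
        intro i
        rw [Finset.sum_ite_eq' Finset.univ (σ i) (fun l => ρ k i • q l)]
        simp [hσ i]
      rw [Finset.sum_congr rfl fun i _ => h2 i, hρ k]
    have hP2 : ∑ l, (∑ i, if k = σ i then ρ l i else 0) • q l
        = ∑ i, (if k = σ i then (∑ j, c j i • v j) else 0) := by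
      have h1 : ∀ l, (∑ i, if k = σ i then ρ l i else 0) • q l
          = ∑ i, (if k = σ i then ρ l i • q l else 0) := by
        intro l
        rw [Finset.sum_smul]
        exact Finset.sum_congr rfl fun i _ => by split <;> simp
      rw [Finset.sum_congr rfl fun l _ => h1 l, Finset.sum_comm]
      refine Finset.sum_congr rfl fun i _ => ?_
      by_cases h2 : k = σ i
      · simp only [h2, if_true]
        rw [← hw i]
      · simp [h2]
    have hP3 : ∑ l, (∑ i, ∑ j, if k = σ i ∧ l = σ j then S' i j else 0) • q l
        = ∑ i, (if k = σ i then (∑ j, c j i • v j) else 0) := by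
      have h1 : ∀ l, (∑ i, ∑ j, if k = σ i ∧ l = σ j then S' i j else 0) • q l
          = ∑ i, ∑ j, (if k = σ i ∧ l = σ j then S' i j • q l else 0) := by
        intro l
        rw [Finset.sum_smul]
        refine Finset.sum_congr rfl fun i _ => ?_
        rw [Finset.sum_smul]
        exact Finset.sum_congr rfl fun j _ => by split <;> simp
      rw [Finset.sum_congr rfl fun l _ => h1 l, Finset.sum_comm]
      refine Finset.sum_congr rfl fun i _ => ?_
      by_cases h2 : k = σ i
      · rw [if_pos h2]
        have h3 : ∀ l, ∑ j, (if k = σ i ∧ l = σ j then S' i j • q l else 0)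
            = ∑ j, (if l = σ j then S' i j • q l else 0) :=
          fun l => Finset.sum_congr rfl fun j _ => by simp [h2]
        rw [Finset.sum_congr rfl fun l _ => h3 l, Finset.sum_comm]
        have h4 : ∀ j, ∑ l, (if l = σ j then S' i j • q l else 0) = S' i j • v j := by
          intro j
          rw [Finset.sum_ite_eq' Finset.univ (σ j) (fun l => S' i j • q l)]
          simp [hσ j]
        rw [Finset.sum_congr rfl fun j _ => h4 j]
        exact Finset.sum_congr rfl fun j _ => hkey i j
      · refine (Finset.sum_eq_zero fun j _ => Finset.sum_eq_zero fun l _ => ?_).trans (by simp [h2])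
        simp [h2]
    rw [hP1, hP2, hP3]
    rw [add_sub_cancel_right]
end

section
/- Let V be a finite abelian group, n ≥ 2|V|, and q ∈ V^n whose entries generate V. Let r ∈ V^n with Σ_k q_k ⊗ r_k ∈ I_2(V). Then there is a symmetric integer matrix A with even diagonal entries such that r = Aq. -/
open TensorProduct

/-- Let `V` be a finite abelian group, `n ≥ 2|V|`, and `q ∈ V^n` whose entries generate
`V`.  If `r ∈ V^n` satisfies `Σ_k q_k ⊗ r_k ∈ I_2(V)`, then there is a symmetric integer
matrix `A` with even diagonal entries such that `r = Aq`. -/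
theorem stmt14 (V : Type*) [AddCommGroup V] [Fintype V] (n : ℕ)
    (hn : 2 * Fintype.card V ≤ n) (q r : Fin n → V)
    (hq : AddSubgroup.closure (Set.range q) = ⊤)
    (hr : (∑ k, q k ⊗ₜ[ℤ] r k) ∈ Submodule.span ℤ
        {x : TensorProduct ℤ V V | ∃ a b : V, x = a ⊗ₜ[ℤ] b + b ⊗ₜ[ℤ] a}) :
    ∃ A : Matrix (Fin n) (Fin n) ℤ, A.IsSymm ∧ (∀ i, Even (A i i)) ∧
      ∀ i, r i = ∑ j, A i j • q j := by
  classical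
  set φ : (Fin n → ℤ) →ₗ[ℤ] V := Fintype.linearCombination ℤ q with hφdef
  have hφ : ∀ x : Fin n → ℤ, φ x = ∑ j, x j • q j := fun x =>
    Fintype.linearCombination_apply ℤ q x
  have hsurj : Function.Surjective φ := by
    intro v
    have h1 : v ∈ Submodule.span ℤ (Set.range q) := by
      have h2 : AddSubgroup.closure (Set.range q) ≤
          (Submodule.span ℤ (Set.range q)).toAddSubgroup :=
        AddSubgroup.closure_le _ |>.2 Submodule.subset_span
      exact h2 (hq ▸ AddSubgroup.mem_top v)
    obtain ⟨c, hc⟩ := (Submodule.mem_span_range_iff_exists_fun ℤ).1 h1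
    exact ⟨c, by rw [hφ]; exact hc⟩
  choose z hz using fun v => hsurj v
  -- representation of hr as a finite sum of generators
  obtain ⟨m, f, g, hg⟩ := Submodule.mem_span_set' (R := ℤ).1 hr
  choose a b hab using fun i : Fin m => (g i).2
  set b' : Fin m → V := fun i => f i • b i with hb'
  have hsum : (∑ k, q k ⊗ₜ[ℤ] r k) = ∑ i, (a i ⊗ₜ[ℤ] b' i + b' i ⊗ₜ[ℤ] a i) := by
    rw [← hg]
    refine Finset.sum_congr rfl fun i _ => ?_
    show f i • (g i : TensorProduct ℤ V V)
      = a i ⊗ₜ[ℤ] (f i • b i) + (f i • b i) ⊗ₜ[ℤ] a i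
    rw [hab i, smul_add, tmul_smul, ← smul_tmul']
  set x : Fin m → Fin n → ℤ := fun i => z (a i) with hxdef
  set y : Fin m → Fin n → ℤ := fun i => z (b' i) with hydef
  have hx : ∀ i, φ (x i) = a i := fun i => hz (a i)
  have hy : ∀ i, φ (y i) = b' i := fun i => hz (b' i)
  -- the defect element in ℤ^n ⊗ V
  set u0 : (Fin n → ℤ) ⊗[ℤ] V :=
    (∑ k, (Pi.single k (1:ℤ)) ⊗ₜ[ℤ] r k) - ∑ i, ((x i) ⊗ₜ[ℤ] b' i + (y i) ⊗ₜ[ℤ] a i)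
    with hu0def
  have hφsingle : ∀ k, φ (Pi.single k (1:ℤ)) = q k := by
    intro k
    rw [hφ]
    simp [Pi.single_apply]
  have hker : LinearMap.rTensor V φ u0 = 0 := by
    rw [hu0def, map_sub, map_sum, map_sum]
    simp only [map_add, LinearMap.rTensor_tmul, hx, hy, hφsingle]
    rw [← hsum]
    exact sub_self _
  have hex : Function.Exact (LinearMap.rTensor V (LinearMap.ker φ).subtype)
      (LinearMap.rTensor V φ) :=
    rTensor_exact V (LinearMap.exact_subtype_ker_map φ) hsurj
  obtain ⟨u', hu'⟩ := (hex u0).1 hker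
  obtain ⟨S, hS⟩ := TensorProduct.exists_finset u'
  have hu0 : u0 = ∑ p ∈ S, ((p.1 : Fin n → ℤ) ⊗ₜ[ℤ] p.2) := by
    rw [← hu', hS, map_sum]
    exact Finset.sum_congr rfl fun p _ => by rw [LinearMap.rTensor_tmul]; rfl
  -- componentwise evaluation
  have hcomp : ∀ k, r k = (∑ i, (x i k • b' i + y i k • a i))
      + ∑ p ∈ S, (p.1 : Fin n → ℤ) k • p.2 := by
    intro k
    set ev : (Fin n → ℤ) ⊗[ℤ] V →ₗ[ℤ] V :=
      TensorProduct.lift ((LinearMap.lsmul ℤ V).comp (LinearMap.proj k))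
    have hev : ∀ (c : Fin n → ℤ) (v : V), ev (c ⊗ₜ[ℤ] v) = c k • v := fun c v => rfl
    have h1 : ev u0 = r k - ∑ i, (x i k • b' i + y i k • a i) := by
      rw [hu0def, map_sub, map_sum, map_sum]
      simp only [map_add, hev]
      congr 1
      simp [Pi.single_apply, ite_smul]
    have h2 : ev u0 = ∑ p ∈ S, (p.1 : Fin n → ℤ) k • p.2 := by
      rw [hu0, map_sum]
      exact Finset.sum_congr rfl fun p _ => hev _ _
    rw [h2] at h1
    rw [h1]; abel
  -- the matrix
  refine ⟨fun k j => (∑ i, (x i k * y i j + y i k * x i j))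
      + ∑ p ∈ S, ((p.1 : Fin n → ℤ) k * z p.2 j + z p.2 k * (p.1 : Fin n → ℤ) j),
    ?_, ?_, ?_⟩
  · refine Matrix.IsSymm.ext fun k j => ?_
    exact congrArg₂ (· + ·) (Finset.sum_congr rfl fun i _ => by ring)
      (Finset.sum_congr rfl fun p _ => by ring)
  · intro k
    refine ⟨(∑ i, x i k * y i k) + ∑ p ∈ S, (p.1 : Fin n → ℤ) k * z p.2 k, ?_⟩
    have e1 : ∑ i, (x i k * y i k + y i k * x i k)
        = (∑ i, x i k * y i k) + (∑ i, x i k * y i k) := by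
      rw [← Finset.sum_add_distrib]
      exact Finset.sum_congr rfl fun i _ => by ring
    have e2 : ∑ p ∈ S, ((p.1 : Fin n → ℤ) k * z p.2 k + z p.2 k * (p.1 : Fin n → ℤ) k)
        = (∑ p ∈ S, (p.1 : Fin n → ℤ) k * z p.2 k)
          + ∑ p ∈ S, (p.1 : Fin n → ℤ) k * z p.2 k := by
      rw [← Finset.sum_add_distrib]
      exact Finset.sum_congr rfl fun p _ => by ring
    show (∑ i, (x i k * y i k + y i k * x i k))
        + ∑ p ∈ S, ((p.1 : Fin n → ℤ) k * z p.2 k + z p.2 k * (p.1 : Fin n → ℤ) k) = _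
    rw [e1, e2]
    ring
  · intro k
    have key : ∀ (c d : Fin n → ℤ) (v : V), φ d = v →
        ∑ j, (c k * d j) • q j = c k • v := by
      intro c d v hv
      rw [← hv, hφ, Finset.smul_sum]
      exact Finset.sum_congr rfl fun j _ => (mul_smul _ _ _)
    have hker0 : ∀ p : ↥(LinearMap.ker φ) × V,
        ∑ j, (z p.2 k * (p.1 : Fin n → ℤ) j) • q j = 0 := by
      intro p
      rw [key (z p.2) (p.1 : Fin n → ℤ) 0 p.1.2, smul_zero]
    have hterm1 : ∀ i : Fin m, x i k • b' i + y i k • a i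
        = ∑ j, ((x i k * y i j + y i k * x i j) • q j) := by
      intro i
      rw [← key (x i) (y i) (b' i) (hy i), ← key (y i) (x i) (a i) (hx i),
        ← Finset.sum_add_distrib]
      exact Finset.sum_congr rfl fun j _ => (add_smul _ _ _).symm
    have hterm2 : ∀ p ∈ S, ((p.1 : Fin n → ℤ) k • p.2 : V)
        = ∑ j, (((p.1 : Fin n → ℤ) k * z p.2 j + z p.2 k * (p.1 : Fin n → ℤ) j) • q j) := by
      intro p hp
      calc ((p.1 : Fin n → ℤ)) k • p.2
          = ∑ j, ((p.1 : Fin n → ℤ) k * z p.2 j) • q j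
            + ∑ j, (z p.2 k * (p.1 : Fin n → ℤ) j) • q j := by
            rw [key _ (z p.2) p.2 (hz p.2), hker0 p, add_zero]
        _ = _ := by
            rw [← Finset.sum_add_distrib]
            exact Finset.sum_congr rfl fun j _ => (add_smul _ _ _).symm
    calc r k
        = (∑ i, (x i k • b' i + y i k • a i)) + ∑ p ∈ S, (p.1 : Fin n → ℤ) k • p.2 :=
          hcomp k
      _ = (∑ i, ∑ j, (x i k * y i j + y i k * x i j) • q j)
          + ∑ p ∈ S, ∑ j, ((p.1 : Fin n → ℤ) k * z p.2 j + z p.2 k * (p.1 : Fin n → ℤ) j) • q j := by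
          rw [Finset.sum_congr rfl fun i _ => hterm1 i, Finset.sum_congr rfl hterm2]
      _ = (∑ j, ∑ i, (x i k * y i j + y i k * x i j) • q j)
          + ∑ j, ∑ p ∈ S, ((p.1 : Fin n → ℤ) k * z p.2 j + z p.2 k * (p.1 : Fin n → ℤ) j) • q j :=
          congrArg₂ (· + ·) Finset.sum_comm Finset.sum_comm
      _ = ∑ j, ((∑ i, (x i k * y i j + y i k * x i j))
          + ∑ p ∈ S, ((p.1 : Fin n → ℤ) k * z p.2 j + z p.2 k * (p.1 : Fin n → ℤ) j)) • q j := by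
          rw [← Finset.sum_add_distrib]
          refine Finset.sum_congr rfl fun j _ => ?_
          rw [add_smul, Finset.sum_smul, Finset.sum_smul]
end

section
/- Let p be a prime and let G_μ, G_λ be finite abelian p-groups of types μ and λ (partitions). Then |Hom(G_μ, G_λ)| = p^{Σ_i μ'_i λ'_i}, where μ', λ' are the transpose partitions. -/
open Finset

/-- Homs into a product decompose. -/
def homPiEquiv {A : Type*} [AddZeroClass A] {ι : Type*} (B : ι → Type*)
    [∀ i, AddZeroClass (B i)] :
    (A →+ ∀ i, B i) ≃ ∀ i, (A →+ B i) where
  toFun f i := (Pi.evalAddMonoidHom B i).comp f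
  invFun g := Pi.addMonoidHom g
  left_inv f := by ext x i; rfl
  right_inv g := by ext i x; rfl

/-- Homs out of a finite product decompose. -/
def piHomEquiv {ι : Type*} [Fintype ι] [DecidableEq ι] (A : ι → Type*)
    [∀ i, AddCommMonoid (A i)] {B : Type*} [AddCommMonoid B] :
    ((∀ i, A i) →+ B) ≃ ∀ i, (A i →+ B) where
  toFun f i := f.comp (AddMonoidHom.single A i)
  invFun g := ∑ i, (g i).comp (Pi.evalAddMonoidHom A i)
  left_inv f := by
    ext x
    simp only [AddMonoidHom.finset_sum_apply, AddMonoidHom.comp_apply,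
      Pi.evalAddMonoidHom_apply, AddMonoidHom.single_apply]
    rw [← map_sum, Finset.univ_sum_single]
  right_inv g := by
    ext i x
    simp only [AddMonoidHom.finset_sum_apply, AddMonoidHom.comp_apply,
      Pi.evalAddMonoidHom_apply, AddMonoidHom.single_apply]
    rw [Finset.sum_eq_single i]
    · simp
    · intro j _ hj; rw [Pi.single_eq_of_ne hj, map_zero]
    · simp

lemma card_hom_zmod (m n : ℕ) (hn : n ≠ 0) :
    Nat.card (ZMod m →+ ZMod n) = Nat.gcd m n := by
  haveI : NeZero n := ⟨hn⟩
  have e1 : (ZMod m →+ ZMod n) ≃ {f : ℤ →+ ZMod n // f m = 0} := (ZMod.lift m).symm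
  have e2 : {f : ℤ →+ ZMod n // f m = 0} ≃ {a : ZMod n // (m : ZMod n) * a = 0} := by
    refine (Equiv.subtypeEquiv (zmultiplesHom (ZMod n)).symm ?_)
    intro f
    have key : f ((m : ℕ) : ℤ) = ((m : ℕ) : ZMod n) * f 1 := by
      rw [show ((m : ℕ) : ℤ) = (m : ℤ) • (1 : ℤ) by simp, map_zsmul, zsmul_eq_mul]
      push_cast
      ring
    simp only [zmultiplesHom_symm_apply]
    rw [key]
  have e3 : {a : ZMod n // (m : ZMod n) * a = 0} ≃ (AddMonoidHom.mulLeft (m : ZMod n)).ker :=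
    Equiv.subtypeEquivRight (fun a => Iff.rfl)
  rw [Nat.card_congr ((e1.trans e2).trans e3)]
  have hrange : (AddMonoidHom.mulLeft (m : ZMod n)).range
      = AddSubgroup.zmultiples ((m : ℕ) : ZMod n) := by
    ext x
    constructor
    · rintro ⟨c, rfl⟩
      show (m : ZMod n) * c ∈ _
      have ha : ((c.val : ℕ) : ZMod n) = c := ZMod.natCast_rightInverse c
      have : (m : ZMod n) * c = c.val • ((m : ℕ) : ZMod n) := by
        rw [nsmul_eq_mul, ha]
        ring
      rw [this]
      exact AddSubgroup.nsmul_mem_zmultiples _ _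
    · rintro ⟨k, rfl⟩
      refine ⟨(k : ZMod n), ?_⟩
      show (m : ZMod n) * (k : ZMod n) = k • ((m : ℕ) : ZMod n)
      rw [zsmul_eq_mul]
      ring
  have hrangecard : Nat.card (AddMonoidHom.mulLeft (m : ZMod n)).range = n / Nat.gcd n m := by
    rw [hrange, Nat.card_zmultiples, ZMod.addOrderOf_coe m hn]
  have hquot := AddSubgroup.card_eq_card_quotient_mul_card_addSubgroup
      (AddMonoidHom.mulLeft (m : ZMod n)).ker
  rw [Nat.card_zmod] at hquot
  have hqr : Nat.card (ZMod n ⧸ (AddMonoidHom.mulLeft (m : ZMod n)).ker)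
      = Nat.card (AddMonoidHom.mulLeft (m : ZMod n)).range :=
    Nat.card_congr (QuotientAddGroup.quotientKerEquivRange _).toEquiv
  rw [hqr, hrangecard] at hquot
  have hg : Nat.gcd n m ∣ n := Nat.gcd_dvd_left n m
  have hn' : 0 < n / Nat.gcd n m :=
    Nat.div_pos (Nat.le_of_dvd (Nat.pos_of_ne_zero hn) hg)
      (Nat.gcd_pos_of_pos_left m (Nat.pos_of_ne_zero hn))
  have h2 : (n / Nat.gcd n m) * Nat.gcd n m
      = (n / Nat.gcd n m) * Nat.card (AddMonoidHom.mulLeft (m : ZMod n)).ker := by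
    rw [Nat.div_mul_cancel hg]; exact hquot
  have := Nat.eq_of_mul_eq_mul_left hn' h2
  rw [← this, Nat.gcd_comm]

/-- Let `G_μ = ⊕ ℤ/p^{μ_i}ℤ` and `G_λ = ⊕ ℤ/p^{λ_j}ℤ` be finite abelian `p`-groups of
types `μ` and `λ` (partitions).  Then `|Hom(G_μ, G_λ)| = p^{Σ_j μ'_j λ'_j}`, where
`μ'_j = #{i : μ_i ≥ j}` is the transpose partition (the sum over `j ≥ 1` being finite). -/
theorem stmt16 (p : ℕ) (hp : p.Prime) (a b : ℕ)
    (mu : Fin a → ℕ) (lam : Fin b → ℕ)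
    (hmu : ∀ i, 0 < mu i) (hlam : ∀ j, 0 < lam j)
    (hmuA : Antitone mu) (hlamA : Antitone lam) :
    Nat.card ((∀ i, ZMod (p ^ mu i)) →+ (∀ j, ZMod (p ^ lam j))) =
      p ^ (∑ j ∈ Finset.Icc 1 (∑ i, mu i + ∑ j, lam j),
        Nat.card {i // j ≤ mu i} * Nat.card {i // j ≤ lam i}) := by
  classical
  have hp0 : p ≠ 0 := hp.pos.ne'
  -- Step 1: card = p ^ (∑ j ∑ i min (mu i) (lam j))
  have h1 : Nat.card ((∀ i, ZMod (p ^ mu i)) →+ (∀ j, ZMod (p ^ lam j)))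
      = p ^ (∑ j, ∑ i, min (mu i) (lam j)) := by
    rw [Nat.card_congr (homPiEquiv _), Nat.card_pi]
    have hj : ∀ j : Fin b, Nat.card ((∀ i, ZMod (p ^ mu i)) →+ ZMod (p ^ lam j))
        = p ^ (∑ i, min (mu i) (lam j)) := by
      intro j
      rw [Nat.card_congr (piHomEquiv _), Nat.card_pi]
      have hi : ∀ i : Fin a, Nat.card (ZMod (p ^ mu i) →+ ZMod (p ^ lam j))
          = p ^ min (mu i) (lam j) := by
        intro i
        rw [card_hom_zmod _ _ (pow_ne_zero _ hp0)]
        rcases le_total (mu i) (lam j) with h | h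
        · rw [Nat.gcd_eq_left (pow_dvd_pow p h), min_eq_left h]
        · rw [Nat.gcd_eq_right (pow_dvd_pow p h), min_eq_right h]
      rw [Finset.prod_congr rfl (fun i _ => hi i), Finset.prod_pow_eq_pow_sum]
    rw [Finset.prod_congr rfl (fun j _ => hj j), Finset.prod_pow_eq_pow_sum]
  rw [h1]
  congr 1
  -- Step 2: exponents agree
  set N := ∑ i, mu i + ∑ j, lam j with hN
  have hmuN : ∀ i, mu i ≤ N := fun i =>
    le_trans (Finset.single_le_sum (fun i _ => Nat.zero_le _) (Finset.mem_univ i))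
      (Nat.le_add_right _ _)
  have hcard : ∀ (n : ℕ) (f : Fin n → ℕ) (k : ℕ),
      Nat.card {i // k ≤ f i} = ∑ i, if k ≤ f i then 1 else 0 := by
    intro n f k
    rw [Nat.card_eq_fintype_card, Fintype.card_subtype, Finset.card_filter]
  have key : ∀ k ∈ Finset.Icc 1 N,
      Nat.card {i // k ≤ mu i} * Nat.card {i // k ≤ lam i}
        = ∑ j, ∑ i, if k ≤ min (mu i) (lam j) then 1 else 0 := by
    intro k _
    rw [hcard, hcard, Finset.sum_mul_sum, Finset.sum_comm]
    refine Finset.sum_congr rfl fun j _ => Finset.sum_congr rfl fun i _ => ?_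
    by_cases h1 : k ≤ mu i <;> by_cases h2 : k ≤ lam j <;>
      simp [h1, h2, le_min_iff]
  have hmin : ∀ (i : Fin a) (j : Fin b),
      ∑ k ∈ Finset.Icc 1 N, (if k ≤ min (mu i) (lam j) then 1 else 0)
        = min (mu i) (lam j) := by
    intro i j
    rw [← Finset.card_filter]
    have hfil : Finset.filter (fun k => k ≤ min (mu i) (lam j)) (Finset.Icc 1 N)
        = Finset.Icc 1 (min (mu i) (lam j)) := by
      have hle : min (mu i) (lam j) ≤ N := le_trans (min_le_left _ _) (hmuN i)
      ext k
      simp only [Finset.mem_filter, Finset.mem_Icc]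
      omega
    rw [hfil, Nat.card_Icc]
    omega
  calc ∑ j, ∑ i, min (mu i) (lam j)
      = ∑ j, ∑ i, ∑ k ∈ Finset.Icc 1 N, (if k ≤ min (mu i) (lam j) then 1 else 0) :=
        Finset.sum_congr rfl fun j _ => Finset.sum_congr rfl fun i _ => (hmin i j).symm
    _ = ∑ j, ∑ k ∈ Finset.Icc 1 N, ∑ i, (if k ≤ min (mu i) (lam j) then 1 else 0) :=
        Finset.sum_congr rfl fun j _ => Finset.sum_comm
    _ = ∑ k ∈ Finset.Icc 1 N, ∑ j, ∑ i, (if k ≤ min (mu i) (lam j) then 1 else 0) :=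
        Finset.sum_comm
    _ = ∑ k ∈ Finset.Icc 1 N, Nat.card {i // k ≤ mu i} * Nat.card {i // k ≤ lam i} :=
        (Finset.sum_congr rfl key).symm
end
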